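/- arXiv:2603.06519 — 10 statements merged into one kernel-verified Lean document; each statement's English description precedes it below -/
import Mathlib

section
/- Let C, K : ℝ → ℝ be continuous, I ⊆ ℝ an open interval containing ξ₀, D̃ a real constant, and φ : ℝ → ℝ continuously differentiable on I with K(φ(ξ)) ≠ 0 on I and satisfying the first-integral relation K(φ(ξ))·φ'(ξ) = D̃·exp( -(1/2)·∫_{ξ₀}^{ξ} s·C(φ(s))/K(φ(s)) ds ) for all ξ ∈ I. Then u(x,t) := φ(x/√t) satisfies the nonlinear heat–diffusion equation C(u)u_t = (K(u)u_x)_x at every point (x,t) with t > 0 and x/√t ∈ I. -/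
open Set


/-- The nonlinear heat–diffusion equation `C(u)·u_t = (K(u)·u_x)_x` holds at the point `p`. -/
def heatEqAt (C K : ℝ → ℝ) (u : ℝ × ℝ → ℝ) (p : ℝ × ℝ) : Prop :=
  C (u p) * deriv (fun s => u (p.1, s)) p.2 =
    deriv (fun y => K (u (y, p.2)) * deriv (fun z => u (z, p.2)) y) p.1

/-- If `φ` satisfies the first integral
`K(φ)φ' = D̃·exp(-(1/2)∫_{ξ₀}^{ξ} s C(φ(s))/K(φ(s)) ds)` on an open interval, then
`u(x,t) = φ(x/√t)` solves `C(u)u_t = (K(u)u_x)_x` for `t > 0`, `x/√t` in the interval. -/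
theorem stmt3 (C K : ℝ → ℝ) (hC : Continuous C) (hK : Continuous K)
    (a b ξ₀ Dt : ℝ) (hξ₀ : ξ₀ ∈ Set.Ioo a b)
    (φ : ℝ → ℝ) (hφ : ContDiffOn ℝ 1 φ (Set.Ioo a b))
    (hKne : ∀ ξ ∈ Set.Ioo a b, K (φ ξ) ≠ 0)
    (hrel : ∀ ξ ∈ Set.Ioo a b,
      K (φ ξ) * deriv φ ξ =
        Dt * Real.exp (-(1 / 2) * ∫ s in ξ₀..ξ, s * C (φ s) / K (φ s))) :
    ∀ x t : ℝ, 0 < t → x / Real.sqrt t ∈ Set.Ioo a b →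
      heatEqAt C K (fun p => φ (p.1 / Real.sqrt p.2)) (x, t) := by
  intro x t ht hmem
  have hst : (0:ℝ) < Real.sqrt t := Real.sqrt_pos.2 ht
  set σ := Real.sqrt t with hσ
  have hσsq : σ ^ 2 = t := Real.sq_sqrt ht.le
  set ξ := x / σ with hξdef
  set g : ℝ → ℝ := fun s => s * C (φ s) / K (φ s) with hg
  have hφc : ContinuousOn φ (Ioo a b) := hφ.continuousOn
  have hgc : ContinuousOn g (Ioo a b) :=
    (continuousOn_id.mul (hC.comp_continuousOn hφc)).div (hK.comp_continuousOn hφc) hKne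
  have hφd : ∀ ζ ∈ Ioo a b, HasDerivAt φ (deriv φ ζ) ζ := by
    intro ζ hζ
    exact ((hφ.differentiableOn one_ne_zero).differentiableAt (isOpen_Ioo.mem_nhds hζ)).hasDerivAt
  set F : ℝ → ℝ := fun ζ => K (φ ζ) * deriv φ ζ with hF
  have hint : IntervalIntegrable g MeasureTheory.volume ξ₀ ξ :=
    (hgc.mono (Set.ordConnected_Ioo.uIcc_subset hξ₀ hmem)).intervalIntegrable
  have hI : HasDerivAt (fun ζ => ∫ s in ξ₀..ζ, g s) (g ξ) ξ :=
    intervalIntegral.integral_hasDerivAt_right hint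
      (hgc.stronglyMeasurableAtFilter isOpen_Ioo ξ hmem)
      (hgc.continuousAt (isOpen_Ioo.mem_nhds hmem))
  have hG : HasDerivAt (fun ζ => Dt * Real.exp (-(1/2) * ∫ s in ξ₀..ζ, g s))
      (Dt * (Real.exp (-(1/2) * ∫ s in ξ₀..ξ, g s) * (-(1/2) * g ξ))) ξ :=
    ((hI.const_mul (-(1/2))).exp).const_mul Dt
  have heq : F =ᶠ[nhds ξ] (fun ζ => Dt * Real.exp (-(1/2) * ∫ s in ξ₀..ζ, g s)) :=
    Filter.eventuallyEq_of_mem (isOpen_Ioo.mem_nhds hmem) fun ζ hζ => hrel ζ hζ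
  have hF' : HasDerivAt F (F ξ * (-(1/2) * g ξ)) ξ := by
    have h1 := hG.congr_of_eventuallyEq heq
    have h2 : Dt * (Real.exp (-(1/2) * ∫ s in ξ₀..ξ, g s) * (-(1/2) * g ξ))
        = F ξ * (-(1/2) * g ξ) := by
      show Dt * (Real.exp (-(1/2) * ∫ s in ξ₀..ξ, g s) * (-(1/2) * g ξ))
        = K (φ ξ) * deriv φ ξ * (-(1/2) * g ξ)
      rw [hrel ξ hmem]; ring
    rwa [h2] at h1
  -- time derivative
  have hsqrt : HasDerivAt Real.sqrt (1 / (2 * σ)) t := Real.hasDerivAt_sqrt ht.ne'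
  have hinv : HasDerivAt (fun s => (Real.sqrt s)⁻¹) (-(1 / (2 * σ)) / σ ^ 2) t :=
    hsqrt.inv hst.ne'
  have hxdiv : HasDerivAt (fun s => x / Real.sqrt s) (x * (-(1 / (2 * σ)) / σ ^ 2)) t := by
    simpa [div_eq_mul_inv] using hinv.const_mul x
  have hLt : HasDerivAt (fun s => φ (x / Real.sqrt s))
      (deriv φ ξ * (x * (-(1 / (2 * σ)) / σ ^ 2))) t :=
    (hφd ξ hmem).comp t hxdiv
  -- inner spatial derivative
  have hinner : ∀ y : ℝ, y / σ ∈ Ioo a b →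
      deriv (fun z => φ (z / σ)) y = deriv φ (y / σ) * (1 / σ) := fun y hy =>
    ((hφd _ hy).comp y ((hasDerivAt_id y).div_const σ)).deriv
  have hUopen : IsOpen {y : ℝ | y / σ ∈ Ioo a b} :=
    isOpen_Ioo.preimage (continuous_id.div_const σ)
  have heq2 : (fun y => K (φ (y / σ)) * deriv (fun z => φ (z / σ)) y)
      =ᶠ[nhds x] (fun y => F (y / σ) * (1 / σ)) :=
    Filter.eventuallyEq_of_mem (hUopen.mem_nhds hmem) fun y hy => by
      rw [hinner y hy]
      simp only [hF]
      ring
  have hH : HasDerivAt (fun y => F (y / σ) * (1 / σ))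
      ((F ξ * (-(1/2) * g ξ)) * (1 / σ) * (1 / σ)) x :=
    ((hF'.comp x ((hasDerivAt_id x).div_const σ)).mul_const (1 / σ))
  simp only [heatEqAt]
  rw [hLt.deriv, heq2.deriv_eq, hH.deriv]
  rw [hF, hg, hξdef]
  have hKne' : K (φ (x / σ)) ≠ 0 := hKne _ hmem
  field_simp
  ring
end

section
/- Let D ≠ 0, E ≠ 0, Q be real constants, K : ℝ → ℝ continuously differentiable, F an antiderivative of K (F' = K), and define C(u) := E·K(u)·exp( F(u)/D ). Let Ω ⊆ ℝ² be open, φ : ℝ → ℝ differentiable with φ(t)² = E/(QE + 2t) for all t in the t-projection of Ω, and u : ℝ × ℝ → ℝ twice continuously differentiable on Ω satisfying the invariant relation x·φ(t) = exp( -F(u(x,t))/(2D) ) for all (x,t) ∈ Ω. Then u satisfies the nonlinear heat–diffusion equation C(u)u_t = (K(u)u_x)_x at every point of Ω. (Invariant solution associated with the generator X₄ in Case 1.2 with B = 0.) -/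
/-- Invariant solution associated with the generator `X₄` in Case 1.2 with `B = 0`:
if `x·φ(t) = exp(-F(u)/(2D))` with `φ(t)² = E/(QE+2t)` and
`C(u) = E·K(u)·exp(F(u)/D)` (where `F' = K`), then `u` solves
`C(u)u_t = (K(u)u_x)_x` on `Ω`. -/
theorem stmt6 (D E Q : ℝ) (hD : D ≠ 0) (hE : E ≠ 0)
    (K : ℝ → ℝ) (hK : ContDiff ℝ 1 K)
    (F : ℝ → ℝ) (hF : ∀ y : ℝ, HasDerivAt F (K y) y)
    (C : ℝ → ℝ) (hC : ∀ y : ℝ, C y = E * K y * Real.exp (F y / D))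
    (Ω : Set (ℝ × ℝ)) (hΩ : IsOpen Ω)
    (φ : ℝ → ℝ) (hφdiff : Differentiable ℝ φ)
    (hφ : ∀ t ∈ Prod.snd '' Ω, φ t ^ 2 = E / (Q * E + 2 * t))
    (u : ℝ × ℝ → ℝ) (hu : ContDiffOn ℝ 2 u Ω)
    (hinv : ∀ p ∈ Ω, p.1 * φ p.2 = Real.exp (-F (u p) / (2 * D))) :
    ∀ p ∈ Ω, heatEqAt C K u p := by
  have h2D : (2 : ℝ) * D ≠ 0 := by positivity
  -- differentiability of u
  have hud : ∀ q ∈ Ω, HasFDerivAt u (fderiv ℝ u q) q := fun q hq =>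
    ((hu.differentiableOn two_ne_zero).differentiableAt (hΩ.mem_nhds hq)).hasFDerivAt
  -- partial derivative in x
  have hux : ∀ q ∈ Ω, HasDerivAt (fun z => u (z, q.2)) (fderiv ℝ u q (1, 0)) q.1 := by
    rintro ⟨a, b⟩ hq
    have h1 : HasDerivAt (fun z : ℝ => (z, b)) ((1:ℝ), (0:ℝ)) a :=
      (hasDerivAt_id a).prodMk (hasDerivAt_const a b)
    exact (hud (a, b) hq).comp_hasDerivAt a h1
  -- spatial relation : K(u)·u_x = -2D/x on Ω
  have hA : ∀ q ∈ Ω, K (u q) * fderiv ℝ u q (1, 0) = -2 * D / q.1 := by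
    rintro ⟨a, b⟩ hq
    have hab : a * φ b = Real.exp (-F (u (a, b)) / (2 * D)) := hinv _ hq
    have habpos : 0 < a * φ b := hab ▸ Real.exp_pos _
    have ha : a ≠ 0 := left_ne_zero_of_mul habpos.ne'
    have hb : φ b ≠ 0 := right_ne_zero_of_mul habpos.ne'
    set d := fderiv ℝ u (a, b) (1, 0) with hd
    have hder : HasDerivAt (fun z => u (z, b)) d a := hux (a, b) hq
    have h3 : HasDerivAt (fun z => -F (u (z, b)) / (2 * D))
        (-(K (u (a, b)) * d) / (2 * D)) a :=
      (((hF (u (a, b))).comp a hder).neg).div_const (2 * D)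
    have h2 := h3.exp
    have h5 : HasDerivAt (fun z : ℝ => z * φ b) (φ b) a := by
      simpa using (hasDerivAt_id a).mul_const (φ b)
    have hev : (fun z : ℝ => z * φ b) =ᶠ[nhds a]
        (fun z => Real.exp (-F (u (z, b)) / (2 * D))) := by
      have hopen : IsOpen {z : ℝ | (z, b) ∈ Ω} :=
        hΩ.preimage (continuous_id.prodMk continuous_const)
      filter_upwards [hopen.mem_nhds hq] with z hz using hinv (z, b) hz
    have h6 : HasDerivAt (fun z : ℝ => z * φ b)
        (Real.exp (-F (u (a, b)) / (2 * D)) * (-(K (u (a, b)) * d) / (2 * D))) a :=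
      h2.congr_of_eventuallyEq hev
    have h7 : φ b = Real.exp (-F (u (a, b)) / (2 * D)) * (-(K (u (a, b)) * d) / (2 * D)) :=
      h5.unique h6
    rw [← hab] at h7
    field_simp at h7 ⊢
    have h8 : φ b * (K (u (a, b)) * d * a + 2 * D) = 0 := by linear_combination φ b * h7
    have h9 := (mul_eq_zero.mp h8).resolve_left hb
    linarith
  -- now the point
  rintro ⟨x, t⟩ hp
  simp only [heatEqAt]
  have hxφ : x * φ t = Real.exp (-F (u (x, t)) / (2 * D)) := hinv (x, t) hp
  have hxφpos : 0 < x * φ t := hxφ ▸ Real.exp_pos _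
  have hx : x ≠ 0 := left_ne_zero_of_mul hxφpos.ne'
  have hφt : φ t ≠ 0 := right_ne_zero_of_mul hxφpos.ne'
  -- partial derivative in t
  set dt := fderiv ℝ u (x, t) (0, 1) with hdt
  have hut : HasDerivAt (fun s => u (x, s)) dt t := by
    have h1 : HasDerivAt (fun s : ℝ => (x, s)) ((0:ℝ), (1:ℝ)) t :=
      (hasDerivAt_const t x).prodMk (hasDerivAt_id t)
    exact (hud (x, t) hp).comp_hasDerivAt t h1
  -- time relation
  have hB : x * deriv φ t = (x * φ t) * (-(K (u (x, t)) * dt) / (2 * D)) := by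
    have h3 : HasDerivAt (fun s => -F (u (x, s)) / (2 * D))
        (-(K (u (x, t)) * dt) / (2 * D)) t :=
      (((hF (u (x, t))).comp t hut).neg).div_const (2 * D)
    have h2 := h3.exp
    have h5 : HasDerivAt (fun s : ℝ => x * φ s) (x * deriv φ t) t :=
      ((hφdiff t).hasDerivAt).const_mul x
    have hev : (fun s : ℝ => x * φ s) =ᶠ[nhds t]
        (fun s => Real.exp (-F (u (x, s)) / (2 * D))) := by
      have hopen : IsOpen {s : ℝ | (x, s) ∈ Ω} :=
        hΩ.preimage (continuous_const.prodMk continuous_id)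
      filter_upwards [hopen.mem_nhds hp] with s hs using hinv (x, s) hs
    have h6 := h2.congr_of_eventuallyEq hev
    rw [← hxφ] at h6
    exact h5.unique h6
  -- derivative of φ
  have htmem : t ∈ Prod.snd '' Ω := ⟨(x, t), hp, rfl⟩
  have hopen2 : IsOpen (Prod.snd '' Ω) := isOpenMap_snd Ω hΩ
  have hSne : Q * E + 2 * t ≠ 0 := by
    intro h
    have h1 := hφ t htmem
    rw [h, div_zero] at h1
    exact hφt (pow_eq_zero_iff two_ne_zero |>.mp h1)
  have hder1 : HasDerivAt (fun s => φ s ^ 2) (2 * φ t * deriv φ t) t := by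
    have := ((hφdiff t).hasDerivAt).fun_pow 2
    simpa [mul_comm] using this
  have hder2 : HasDerivAt (fun s => E / (Q * E + 2 * s))
      ((0 * (Q * E + 2 * t) - E * 2) / (Q * E + 2 * t) ^ 2) t := by
    have h1 : HasDerivAt (fun s : ℝ => Q * E + 2 * s) 2 t := by
      simpa using (((hasDerivAt_id t).const_mul 2).const_add (Q * E))
    exact (hasDerivAt_const t E).div h1 hSne
  have hev2 : (fun s => φ s ^ 2) =ᶠ[nhds t] (fun s => E / (Q * E + 2 * s)) := by
    filter_upwards [hopen2.mem_nhds htmem] with s hs using hφ s hs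
  have heq : 2 * φ t * deriv φ t = (0 * (Q * E + 2 * t) - E * 2) / (Q * E + 2 * t) ^ 2 :=
    hder1.unique (hder2.congr_of_eventuallyEq hev2)
  have hφt2 : φ t ^ 2 = E / (Q * E + 2 * t) := hφ t htmem
  have hd : E * deriv φ t = -(φ t) ^ 3 := by
    have g1 : φ t ^ 2 * (Q * E + 2 * t) = E := by
      rw [hφt2, div_mul_cancel₀ _ hSne]
    have g2 : 2 * φ t * deriv φ t * (Q * E + 2 * t) ^ 2 = -(E * 2) := by
      field_simp at heq; linarith [heq]
    have key : (2 * φ t * (Q * E + 2 * t)) * (deriv φ t * (Q * E + 2 * t) + φ t) = 0 := by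
      linear_combination g2 + 2 * g1
    have h0 : deriv φ t * (Q * E + 2 * t) + φ t = 0 := by
      rcases mul_eq_zero.mp key with h | h
      · exact absurd h (by positivity)
      · exact h
    linear_combination φ t ^ 2 * h0 - deriv φ t * g1
  -- exp(F/D) relation
  have he : Real.exp (F (u (x, t)) / D) * (x * φ t) ^ 2 = 1 := by
    have harg : F (u (x, t)) / D + (2 : ℕ) * (-F (u (x, t)) / (2 * D)) = 0 := by
      push_cast; field_simp; ring
    rw [hxφ, ← Real.exp_nat_mul, ← Real.exp_add, harg, Real.exp_zero]
  -- compute RHS derivative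
  have hslice : IsOpen {y : ℝ | (y, t) ∈ Ω} :=
    hΩ.preimage (continuous_id.prodMk continuous_const)
  have hevD : (fun y => K (u (y, t)) * deriv (fun z => u (z, t)) y) =ᶠ[nhds x]
      (fun y => -2 * D / y) := by
    filter_upwards [hslice.mem_nhds hp] with y hy
    rw [(hux (y, t) hy).deriv]
    exact hA (y, t) hy
  have hderD : HasDerivAt (fun y : ℝ => -2 * D / y) (2 * D / x ^ 2) x := by
    have := (hasDerivAt_inv hx).const_mul (-2 * D)
    have heqf : (fun y : ℝ => -2 * D * y⁻¹) = fun y => -2 * D / y := by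
      funext y; rw [div_eq_mul_inv]
    rw [heqf] at this
    refine this.congr_deriv ?_
    ring
  rw [hevD.deriv_eq, hderD.deriv, hut.deriv, hC]
  -- final arithmetic
  have h1 : x * φ t * (K (u (x, t)) * dt) = -(2 * D) * (x * deriv φ t) := by
    rw [hB]; field_simp
  have h1' : x * (K (u (x, t)) * dt * φ t) = x * (-(2 * D) * deriv φ t) := by
    linear_combination h1
  have hKdt' : K (u (x, t)) * dt * φ t = -(2 * D) * deriv φ t := mul_left_cancel₀ hx h1'
  have hnz : x ^ 2 * φ t ^ 3 * E ≠ 0 :=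
    mul_ne_zero (mul_ne_zero (pow_ne_zero 2 hx) (pow_ne_zero 3 hφt)) hE
  have big : (E * K (u (x, t)) * Real.exp (F (u (x, t)) / D) * dt) * (x ^ 2 * φ t ^ 3 * E)
      = (2 * D / x ^ 2) * (x ^ 2 * φ t ^ 3 * E) := by
    have hr : (2 * D / x ^ 2) * (x ^ 2 * φ t ^ 3 * E) = 2 * D * φ t ^ 3 * E := by
      field_simp
    rw [hr]
    linear_combination (E ^ 2 * Real.exp (F (u (x, t)) / D) * x ^ 2 * φ t ^ 2) * hKdt'
      + (-(2 * D * E * Real.exp (F (u (x, t)) / D) * x ^ 2 * φ t ^ 2)) * hd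
      + (2 * D * E * φ t ^ 3) * he
  exact mul_right_cancel₀ hnz big
end

section
/- Let M, N be real constants, u₂ ≠ 0 a real constant, K : ℝ → ℝ continuously differentiable, F an antiderivative of K (F' = K), and define C(u) := N·K(u)/(4M - F(u))⁴. Let Ω ⊆ ℝ² be open with x ≠ 0 for all (x,t) ∈ Ω, and let u : ℝ × ℝ → ℝ be twice continuously differentiable on Ω satisfying the invariant relation x = ( F(u(x,t)) - 4M )·u₂ for all (x,t) ∈ Ω. Then u satisfies the nonlinear heat–diffusion equation C(u)u_t = (K(u)u_x)_x at every point of Ω. (Invariant solution associated with the generator X₅ in Case 1.3.) -/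
/-- Invariant solution associated with the generator `X₅` in Case 1.3: if
`x = (F(u) - 4M)·u₂` with `C(u) = N·K(u)/(4M - F(u))⁴` (where `F' = K`),
then `u` solves `C(u)u_t = (K(u)u_x)_x` on `Ω`. -/
theorem stmt7 (M N u₂ : ℝ) (hu₂ : u₂ ≠ 0)
    (K : ℝ → ℝ) (hK : ContDiff ℝ 1 K)
    (F : ℝ → ℝ) (hF : ∀ y : ℝ, HasDerivAt F (K y) y)
    (C : ℝ → ℝ) (hC : ∀ y : ℝ, C y = N * K y / (4 * M - F y) ^ 4)
    (Ω : Set (ℝ × ℝ)) (hΩ : IsOpen Ω) (hx : ∀ p ∈ Ω, p.1 ≠ 0)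
    (u : ℝ × ℝ → ℝ) (hu : ContDiffOn ℝ 2 u Ω)
    (hinv : ∀ p ∈ Ω, p.1 = (F (u p) - 4 * M) * u₂) :
    ∀ p ∈ Ω, heatEqAt C K u p := by
  intro p hp
  have hdiff : ∀ q ∈ Ω, DifferentiableAt ℝ u q := by
    intro q hq
    exact ((hu q hq).contDiffAt (hΩ.mem_nhds hq)).differentiableAt (by norm_num)
  -- slice derivatives
  have hslice_t : HasDerivAt (fun s => u (p.1, s)) (deriv (fun s => u (p.1, s)) p.2) p.2 := by
    have : DifferentiableAt ℝ (fun s : ℝ => u (p.1, s)) p.2 :=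
      (hdiff p hp).comp p.2 ((differentiableAt_const _).prodMk differentiableAt_id)
    exact this.hasDerivAt
  set ut := deriv (fun s => u (p.1, s)) p.2 with hut
  -- F ∘ u in t-direction
  have hFt : HasDerivAt (fun s => F (u (p.1, s))) (K (u p) * ut) p.2 := by
    have := (hF (u p)).comp p.2 hslice_t
    exact this
  -- eventually constant in t
  have hmemT : ∀ᶠ s in nhds p.2, (p.1, s) ∈ Ω := by
    have : Continuous (fun s : ℝ => ((p.1, s) : ℝ × ℝ)) := continuous_const.prodMk continuous_id
    exact this.continuousAt.preimage_mem_nhds (hΩ.mem_nhds (by simpa using hp))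
  have hconst_t : (fun s => F (u (p.1, s))) =ᶠ[nhds p.2]
      (fun _ => p.1 / u₂ + 4 * M) := by
    filter_upwards [hmemT] with s hs
    have h := hinv (p.1, s) hs
    simp only at h
    field_simp
    ring_nf at h ⊢
    linarith
  have hKt : K (u p) * ut = 0 := by
    have h1 : deriv (fun s => F (u (p.1, s))) p.2 = K (u p) * ut := hFt.deriv
    have h2 : deriv (fun s => F (u (p.1, s))) p.2
        = deriv (fun _ : ℝ => p.1 / u₂ + 4 * M) p.2 := hconst_t.deriv_eq
    rw [deriv_const] at h2
    rw [← h1, h2]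
  -- x-direction: K(u)·u_x = 1/u₂ near p.1
  have hmemX : ∀ᶠ y in nhds p.1, (y, p.2) ∈ Ω := by
    have : Continuous (fun y : ℝ => ((y, p.2) : ℝ × ℝ)) := continuous_id.prodMk continuous_const
    exact this.continuousAt.preimage_mem_nhds (hΩ.mem_nhds (by simpa using hp))
  have hx_eq : ∀ᶠ y in nhds p.1,
      K (u (y, p.2)) * deriv (fun z => u (z, p.2)) y = 1 / u₂ := by
    filter_upwards [hmemX, eventually_eventually_nhds.mpr hmemX] with y hy hnb
    have hslice_x : HasDerivAt (fun z => u (z, p.2)) (deriv (fun z => u (z, p.2)) y) y := by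
      have : DifferentiableAt ℝ (fun z : ℝ => u (z, p.2)) y :=
        (hdiff (y, p.2) hy).comp y (differentiableAt_id.prodMk (differentiableAt_const _))
      exact this.hasDerivAt
    have hFx : HasDerivAt (fun z => F (u (z, p.2)))
        (K (u (y, p.2)) * deriv (fun z => u (z, p.2)) y) y := by
      have := (hF (u (y, p.2))).comp y hslice_x
      exact this
    have hlin : HasDerivAt (fun z : ℝ => z / u₂ + 4 * M) (1 / u₂) y := by
      simpa using ((hasDerivAt_id y).div_const u₂).add_const (4 * M)
    have heq : (fun z => F (u (z, p.2))) =ᶠ[nhds y] (fun z => z / u₂ + 4 * M) := by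
      filter_upwards [hnb] with z hz
      have h := hinv (z, p.2) hz
      simp only at h
      field_simp
      ring_nf at h ⊢
      linarith
    have hFx' : HasDerivAt (fun z => F (u (z, p.2))) (1 / u₂) y :=
      hlin.congr_of_eventuallyEq heq
    exact hFx.unique hFx'
  have hRHS : deriv (fun y => K (u (y, p.2)) * deriv (fun z => u (z, p.2)) y) p.1 = 0 := by
    have : (fun y => K (u (y, p.2)) * deriv (fun z => u (z, p.2)) y)
        =ᶠ[nhds p.1] (fun _ => 1 / u₂) := hx_eq
    rw [this.deriv_eq, deriv_const]
  show C (u p) * ut = _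
  rw [hRHS, hC]
  have : N * K (u p) / (4 * M - F (u p)) ^ 4 * ut
      = N / (4 * M - F (u p)) ^ 4 * (K (u p) * ut) := by ring
  rw [this, hKt, mul_zero]
end

section
/- Let B ≠ 0, D, E be real constants, K : ℝ → ℝ continuously differentiable, F an antiderivative of K (F' = K), and define C(u) := E·K(u)·(B·F(u)+D)^{1/B}. Let Ω ⊆ ℝ² be open, and let u : ℝ × ℝ → ℝ be twice continuously differentiable with B·F(u) + D > 0 on Ω and satisfying the nonlinear heat–diffusion equation C(u)u_t = (K(u)u_x)_x on Ω. For ε ∈ ℝ, let v : ℝ × ℝ → ℝ be twice continuously differentiable on Ω' := {(x,t) : (e^{-ε}x, t) ∈ Ω} and satisfy B·F(v(x,t)) + D = e^{-2Bε}·( B·F(u(e^{-ε}x, t)) + D ) on Ω'. Then v satisfies C(v)v_t = (K(v)v_x)_x at every point of Ω'. (Invariance under the one-parameter group S₄ generated by X₄ = x∂_x - 2A(u)∂_u.) -/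
lemma my_deriv_comp_const_mul {a : ℝ} (ha : a ≠ 0) (f : ℝ → ℝ) (x : ℝ) :
    deriv (fun y => f (a * y)) x = a * deriv f (a * x) := by
  by_cases h : DifferentiableAt ℝ f (a * x)
  · have hin : HasDerivAt (fun y : ℝ => a * y) a x := by
      simpa using (hasDerivAt_id x).const_mul a
    have := (h.hasDerivAt.comp x hin).deriv
    exact this.trans (mul_comm _ _)
  · have h1 : ¬ DifferentiableAt ℝ (fun y => f (a * y)) x := by
      intro hcon
      apply h
      have hin : DifferentiableAt ℝ (fun y : ℝ => a⁻¹ * y) (a * x) :=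
        (differentiableAt_id).const_mul _
      have hcon' : DifferentiableAt ℝ (fun y => f (a * y)) (a⁻¹ * (a * x)) := by
        rwa [inv_mul_cancel_left₀ ha]
      have h2 := hcon'.comp (a * x) hin
      have heq : ((fun y => f (a * y)) ∘ fun y => a⁻¹ * y) = f := by
        funext y; simp [Function.comp, ← mul_assoc, mul_inv_cancel₀ ha]
      rwa [heq] at h2
    rw [deriv_zero_of_not_differentiableAt h, deriv_zero_of_not_differentiableAt h1, mul_zero]

lemma my_px {f : ℝ × ℝ → ℝ} {Ω : Set (ℝ × ℝ)} (hΩ : IsOpen Ω)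
    (hf : ContDiffOn ℝ 2 f Ω) {a b : ℝ} (hq : (a, b) ∈ Ω) :
    HasDerivAt (fun y => f (y, b)) (deriv (fun y => f (y, b)) a) a := by
  have hdiff : DifferentiableAt ℝ f (a, b) :=
    (hf.contDiffAt (hΩ.mem_nhds hq)).differentiableAt (by norm_num)
  have h1 : DifferentiableAt ℝ (fun y : ℝ => ((y, b) : ℝ × ℝ)) a :=
    differentiableAt_id.prodMk (differentiableAt_const _)
  exact (hdiff.comp a h1).hasDerivAt

lemma my_pt {f : ℝ × ℝ → ℝ} {Ω : Set (ℝ × ℝ)} (hΩ : IsOpen Ω)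
    (hf : ContDiffOn ℝ 2 f Ω) {a b : ℝ} (hq : (a, b) ∈ Ω) :
    HasDerivAt (fun s => f (a, s)) (deriv (fun s => f (a, s)) b) b := by
  have hdiff : DifferentiableAt ℝ f (a, b) :=
    (hf.contDiffAt (hΩ.mem_nhds hq)).differentiableAt (by norm_num)
  have h1 : DifferentiableAt ℝ (fun s : ℝ => ((a, s) : ℝ × ℝ)) b :=
    (differentiableAt_const _).prodMk differentiableAt_id
  exact (hdiff.comp b h1).hasDerivAt

/-- Invariance under the one-parameter group `S₄` generated by `X₄ = x∂_x - 2A(u)∂_u`: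
if `u` solves `C(u)u_t = (K(u)u_x)_x` with `C(u) = E·K(u)·(B·F(u)+D)^{1/B}` and `v`
satisfies `B·F(v(x,t)) + D = e^{-2Bε}(B·F(u(e^{-ε}x,t)) + D)`, then `v` also solves
the equation on the transformed domain. -/
theorem stmt8 (B D E ε : ℝ) (hB : B ≠ 0)
    (K : ℝ → ℝ) (hK : ContDiff ℝ 1 K)
    (F : ℝ → ℝ) (hF : ∀ y : ℝ, HasDerivAt F (K y) y)
    (C : ℝ → ℝ) (hC : ∀ y : ℝ, C y = E * K y * (B * F y + D) ^ (1 / B : ℝ))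
    (Ω : Set (ℝ × ℝ)) (hΩ : IsOpen Ω)
    (u : ℝ × ℝ → ℝ) (hu : ContDiffOn ℝ 2 u Ω)
    (hpos : ∀ p ∈ Ω, 0 < B * F (u p) + D)
    (hpde : ∀ p ∈ Ω, heatEqAt C K u p)
    (v : ℝ × ℝ → ℝ)
    (hv : ContDiffOn ℝ 2 v {p : ℝ × ℝ | (Real.exp (-ε) * p.1, p.2) ∈ Ω})
    (hvrel : ∀ p : ℝ × ℝ, (Real.exp (-ε) * p.1, p.2) ∈ Ω →
      B * F (v p) + D =
        Real.exp (-2 * B * ε) * (B * F (u (Real.exp (-ε) * p.1, p.2)) + D)) :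
    ∀ p : ℝ × ℝ, (Real.exp (-ε) * p.1, p.2) ∈ Ω → heatEqAt C K v p := by
  intro p hp
  obtain ⟨x, t⟩ := p
  set lam := Real.exp (-ε) with hlamdef
  have hlam_pos : (0:ℝ) < lam := Real.exp_pos _
  have hlam_ne : lam ≠ 0 := ne_of_gt hlam_pos
  set c := Real.exp (-2 * B * ε) with hcdef
  have hc_pos : (0:ℝ) < c := Real.exp_pos _
  have hp' : ((lam * x, t) : ℝ × ℝ) ∈ Ω := hp
  have hΩ' : IsOpen {r : ℝ × ℝ | (lam * r.1, r.2) ∈ Ω} :=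
    hΩ.preimage (by fun_prop)
  have hopenx : IsOpen {y : ℝ | (lam * y, t) ∈ Ω} :=
    hΩ.preimage (f := fun y : ℝ => ((lam * y, t) : ℝ × ℝ)) (by fun_prop)
  have hopent : IsOpen {s : ℝ | (lam * x, s) ∈ Ω} :=
    hΩ.preimage (f := fun s : ℝ => ((lam * x, s) : ℝ × ℝ)) (by fun_prop)
  -- spatial relation
  have key : ∀ y : ℝ, (lam * y, t) ∈ Ω →
      K (v (y, t)) * deriv (fun z => v (z, t)) y =
        c * lam * (K (u (lam * y, t)) * deriv (fun z => u (z, t)) (lam * y)) := by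
    intro y hy
    have hvxy := my_px hΩ' hv (show ((y, t) : ℝ × ℝ) ∈ _ from hy)
    have h1 : HasDerivAt (fun z => B * F (v (z, t)) + D)
        (B * (K (v (y, t)) * deriv (fun z => v (z, t)) y)) y := by
      have := (((hF (v (y, t))).comp y hvxy).const_mul B).add_const D
      simpa [Function.comp] using this
    have huxy := my_px hΩ hu hy
    have hscale : HasDerivAt (fun z : ℝ => lam * z) lam y := by
      simpa using (hasDerivAt_id y).const_mul lam
    have h2a : HasDerivAt (fun z => u (lam * z, t))
        (deriv (fun z => u (z, t)) (lam * y) * lam) y := by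
      have := huxy.comp y hscale
      exact this
    have h2 : HasDerivAt (fun z => c * (B * F (u (lam * z, t)) + D))
        (c * (B * (K (u (lam * y, t)) * (deriv (fun z => u (z, t)) (lam * y) * lam)))) y := by
      have := ((((hF (u (lam * y, t))).comp y h2a).const_mul B).add_const D).const_mul c
      simpa [Function.comp] using this
    have hev : (fun z => B * F (v (z, t)) + D) =ᶠ[nhds y]
        (fun z => c * (B * F (u (lam * z, t)) + D)) := by
      filter_upwards [hopenx.mem_nhds hy] with z hz
      exact hvrel (z, t) hz
    have huniq := h1.unique (h2.congr_of_eventuallyEq hev)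
    have hB' : B * (K (v (y, t)) * deriv (fun z => v (z, t)) y)
        = B * (c * lam * (K (u (lam * y, t)) * deriv (fun z => u (z, t)) (lam * y))) := by
      rw [huniq]; ring
    exact mul_left_cancel₀ hB hB'
  -- time relation
  have hvt := my_pt hΩ' hv (show ((x, t) : ℝ × ℝ) ∈ _ from hp')
  have hut := my_pt hΩ hu hp'
  have keyT : K (v (x, t)) * deriv (fun s => v (x, s)) t
      = c * (K (u (lam * x, t)) * deriv (fun s => u (lam * x, s)) t) := by
    have h1 : HasDerivAt (fun s => B * F (v (x, s)) + D)
        (B * (K (v (x, t)) * deriv (fun s => v (x, s)) t)) t := by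
      have := (((hF (v (x, t))).comp t hvt).const_mul B).add_const D
      simpa [Function.comp] using this
    have h2 : HasDerivAt (fun s => c * (B * F (u (lam * x, s)) + D))
        (c * (B * (K (u (lam * x, t)) * deriv (fun s => u (lam * x, s)) t))) t := by
      have := ((((hF (u (lam * x, t))).comp t hut).const_mul B).add_const D).const_mul c
      simpa [Function.comp] using this
    have hev : (fun s => B * F (v (x, s)) + D) =ᶠ[nhds t]
        (fun s => c * (B * F (u (lam * x, s)) + D)) := by
      filter_upwards [hopent.mem_nhds hp'] with s hs
      exact hvrel (x, s) hs
    have huniq := h1.unique (h2.congr_of_eventuallyEq hev)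
    have hB' : B * (K (v (x, t)) * deriv (fun s => v (x, s)) t)
        = B * (c * (K (u (lam * x, t)) * deriv (fun s => u (lam * x, s)) t)) := by
      rw [huniq]; ring
    exact mul_left_cancel₀ hB hB'
  -- derivative of RHS
  have hev2 : (fun y => K (v (y, t)) * deriv (fun z => v (z, t)) y) =ᶠ[nhds x]
      (fun y => c * lam * (K (u (lam * y, t)) * deriv (fun z => u (z, t)) (lam * y))) := by
    filter_upwards [hopenx.mem_nhds hp'] with y hy
    exact key y hy
  have hder : deriv (fun y => K (v (y, t)) * deriv (fun z => v (z, t)) y) x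
      = c * lam * (lam * deriv (fun y => K (u (y, t)) * deriv (fun z => u (z, t)) y) (lam * x)) := by
    rw [hev2.deriv_eq, deriv_const_mul_field (c * lam)]
    congr 1
    exact my_deriv_comp_const_mul hlam_ne (fun y => K (u (y, t)) * deriv (fun z => u (z, t)) y) x
  have hpde' : C (u (lam * x, t)) * deriv (fun s => u (lam * x, s)) t
      = deriv (fun y => K (u (y, t)) * deriv (fun z => u (z, t)) y) (lam * x) := hpde _ hp'
  -- rpow computation
  have hrpow : (B * F (v (x, t)) + D) ^ (1 / B : ℝ)
      = lam * lam * (B * F (u (lam * x, t)) + D) ^ (1 / B : ℝ) := by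
    rw [hvrel (x, t) hp', Real.mul_rpow (le_of_lt hc_pos) (le_of_lt (hpos _ hp'))]
    congr 1
    calc c ^ (1 / B : ℝ) = Real.exp ((-2 * B * ε) * (1 / B)) := by
          rw [hcdef, Real.rpow_def_of_pos (Real.exp_pos _), Real.log_exp]
      _ = lam * lam := by
          rw [hlamdef, ← Real.exp_add]
          congr 1
          field_simp
          ring
  show C (v (x, t)) * deriv (fun s => v (x, s)) t
      = deriv (fun y => K (v (y, t)) * deriv (fun z => v (z, t)) y) x
  rw [hder, ← hpde', hC, hC, hrpow]
  linear_combination (E * (lam * lam) * (B * F (u (lam * x, t)) + D) ^ (1 / B : ℝ)) * keyT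
end

section
/- Let α, a, b be real constants, K : ℝ → ℝ continuously differentiable, and F an antiderivative of K (F' = K). Let Ω ⊆ ℝ × (0,∞) be open and u : ℝ × ℝ → ℝ twice continuously differentiable on Ω satisfying the implicit relation F(u(x,t)) = (a·x/t + b)·t^{-1/2}·exp( -α x²/(4t) ) for all (x,t) ∈ Ω. Then u satisfies the nonlinear heat–diffusion equation C(u)u_t = (K(u)u_x)_x with C = αK at every point of Ω. (Invariant solution associated with the generator X̄₁ = tx∂_x + t²∂_t - (αx²/4 + t/2)(∫K du/K)∂_u in Case 2.) -/
noncomputable def gxFun (α a b t : ℝ) : ℝ → ℝ := fun x =>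
  a / t * t ^ (-(1 / 2) : ℝ) * Real.exp (-α * x ^ 2 / (4 * t)) +
  (a * x / t + b) * t ^ (-(1 / 2) : ℝ) *
    (Real.exp (-α * x ^ 2 / (4 * t)) * (-α * (2 * x) / (4 * t)))

lemma hasDerivAt_g (α a b t : ℝ) (x : ℝ) :
    HasDerivAt (fun y => (a * y / t + b) * t ^ (-(1 / 2) : ℝ) *
      Real.exp (-α * y ^ 2 / (4 * t))) (gxFun α a b t x) x := by
  have h1 : HasDerivAt (fun y => (a * y / t + b) * t ^ (-(1 / 2) : ℝ))
      (a / t * t ^ (-(1 / 2) : ℝ)) x := by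
    have := ((((hasDerivAt_id x).const_mul a).div_const t).add_const b).mul_const
      (t ^ (-(1 / 2) : ℝ))
    simpa using this
  have h2 : HasDerivAt (fun y => -α * y ^ 2 / (4 * t)) (-α * (2 * x) / (4 * t)) x := by
    have := ((hasDerivAt_pow 2 x).const_mul (-α)).div_const (4 * t)
    simpa using this
  exact h1.mul h2.exp

noncomputable def gxxVal (α a b t x : ℝ) : ℝ :=
  ((-(a / t) * (α * x / (2 * t)) - (a * x / t + b) * (α / (2 * t)))
    + (a / t - (a * x / t + b) * (α * x / (2 * t))) * (-(α * x) / (2 * t)))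
    * t ^ (-(1 / 2) : ℝ) * Real.exp (-α * x ^ 2 / (4 * t))

lemma hasDerivAt_gx (α a b t : ℝ) (ht : t ≠ 0) (x : ℝ) :
    HasDerivAt (gxFun α a b t) (gxxVal α a b t x) x := by
  have h2 : HasDerivAt (fun y => -α * y ^ 2 / (4 * t)) (-α * (2 * x) / (4 * t)) x := by
    have := ((hasDerivAt_pow 2 x).const_mul (-α)).div_const (4 * t)
    simpa using this
  have h1 : HasDerivAt (fun y => (a * y / t + b) * t ^ (-(1 / 2) : ℝ))
      (a / t * t ^ (-(1 / 2) : ℝ)) x := by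
    have := ((((hasDerivAt_id x).const_mul a).div_const t).add_const b).mul_const
      (t ^ (-(1 / 2) : ℝ))
    simpa using this
  have hL : HasDerivAt (fun y => -α * (2 * y) / (4 * t)) (-α * 2 / (4 * t)) x := by
    have := (((hasDerivAt_id x).const_mul 2).const_mul (-α)).div_const (4 * t)
    simpa using this
  have hterm1 := h2.exp.const_mul (a / t * t ^ (-(1 / 2) : ℝ))
  have hterm2 := h1.mul (h2.exp.mul hL)
  have H := hterm1.add hterm2
  refine H.congr_deriv ?_
  symm
  unfold gxxVal
  simp only [Pi.mul_apply, Pi.add_apply]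
  field_simp
  ring

noncomputable def gtVal (α a b t x : ℝ) : ℝ :=
  (-(a * x) / t ^ 2 * t ^ (-(1 / 2) : ℝ)
    + (a * x / t + b) * ((-(1 / 2) : ℝ) * t ^ ((-(1 / 2) : ℝ) - 1))
    + (a * x / t + b) * t ^ (-(1 / 2) : ℝ) * (α * x ^ 2 / (4 * t ^ 2)))
    * Real.exp (-α * x ^ 2 / (4 * t))

lemma hasDerivAt_gt (α a b x t : ℝ) (ht : 0 < t) :
    HasDerivAt (fun s => (a * x / s + b) * s ^ (-(1 / 2) : ℝ) *
      Real.exp (-α * x ^ 2 / (4 * s))) (gtVal α a b t x) t := by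
  have htne : t ≠ 0 := ne_of_gt ht
  have hf1 : HasDerivAt (fun s : ℝ => a * x / s + b)
      ((0 * t - a * x * 1) / t ^ 2) t :=
    ((hasDerivAt_const t (a * x)).div (hasDerivAt_id t) htne).add_const b
  have hf2 : HasDerivAt (fun s : ℝ => s ^ (-(1 / 2) : ℝ))
      ((-(1 / 2) : ℝ) * t ^ ((-(1 / 2) : ℝ) - 1)) t :=
    Real.hasDerivAt_rpow_const (Or.inl htne)
  have hf3i : HasDerivAt (fun s : ℝ => -α * x ^ 2 / (4 * s))
      ((0 * (4 * t) - -α * x ^ 2 * (4 * 1)) / (4 * t) ^ 2) t :=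
    (hasDerivAt_const t (-α * x ^ 2)).div ((hasDerivAt_id t).const_mul 4)
      (by positivity)
  have H := (hf1.mul_const (t ^ (-(1 / 2) : ℝ)) |>.add
      ((hf2.const_mul (a * x / t + b)))) |>.mul hf3i.exp
  -- function shapes: build product of three directly instead
  have H1 := hf1.mul hf2
  have H2 := H1.mul hf3i.exp
  refine H2.congr_deriv ?_
  symm
  unfold gtVal
  simp only [Pi.mul_apply, Pi.add_apply]
  field_simp
  ring

lemma key_algebra (α a b t x : ℝ) (ht : 0 < t) :
    α * gtVal α a b t x = gxxVal α a b t x := by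
  have htne : t ≠ 0 := ne_of_gt ht
  have hts : t ^ ((-(1 / 2) : ℝ) - 1) = t ^ (-(1 / 2) : ℝ) / t := by
    rw [Real.rpow_sub ht, Real.rpow_one]
  unfold gtVal gxxVal
  rw [hts]
  field_simp
  ring

/-- Invariant solution associated with the generator `X̄₁` in Case 2 (`C = αK`):
if `F(u(x,t)) = (a·x/t + b)·t^{-1/2}·exp(-αx²/(4t))` (where `F' = K`), then `u`
solves `αK(u)u_t = (K(u)u_x)_x` on `Ω`. -/
theorem stmt9 (α a b : ℝ) (K : ℝ → ℝ) (hK : ContDiff ℝ 1 K)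
    (F : ℝ → ℝ) (hF : ∀ y : ℝ, HasDerivAt F (K y) y)
    (Ω : Set (ℝ × ℝ)) (hΩ : IsOpen Ω) (hΩsub : Ω ⊆ {p : ℝ × ℝ | 0 < p.2})
    (u : ℝ × ℝ → ℝ) (hu : ContDiffOn ℝ 2 u Ω)
    (hrel : ∀ p ∈ Ω, F (u p) =
      (a * p.1 / p.2 + b) * p.2 ^ (-(1 / 2) : ℝ) *
        Real.exp (-α * p.1 ^ 2 / (4 * p.2))) :
    ∀ p ∈ Ω, heatEqAt (fun y => α * K y) K u p := by
  have hudiff : ∀ q ∈ Ω, HasFDerivAt u (fderiv ℝ u q) q := fun q hq =>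
    ((hu.differentiableOn (by norm_num)).differentiableAt (hΩ.mem_nhds hq)).hasFDerivAt
  have hux : ∀ q ∈ Ω, HasDerivAt (fun z => u (z, q.2)) (fderiv ℝ u q (1, 0)) q.1 :=
    fun q hq => (hudiff q hq).comp_hasDerivAt q.1
      ((hasDerivAt_id q.1).prodMk (hasDerivAt_const q.1 q.2))
  have key_x : ∀ q ∈ Ω, K (u q) * fderiv ℝ u q (1, 0) = gxFun α a b q.2 q.1 := by
    intro q hq
    have hd1 : HasDerivAt (fun y => F (u (y, q.2)))
        (K (u q) * fderiv ℝ u q (1, 0)) q.1 :=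
      (hF (u q)).comp q.1 (hux q hq)
    have hEq : (fun y => F (u (y, q.2))) =ᶠ[nhds q.1]
        (fun y => (a * y / q.2 + b) * q.2 ^ (-(1 / 2) : ℝ) *
          Real.exp (-α * y ^ 2 / (4 * q.2))) := by
      have hop : IsOpen {y : ℝ | (y, q.2) ∈ Ω} :=
        hΩ.preimage (continuous_id.prodMk continuous_const)
      filter_upwards [hop.mem_nhds hq] with y hy
      exact hrel (y, q.2) hy
    exact (hd1.congr_of_eventuallyEq hEq.symm).unique (hasDerivAt_g α a b q.2 q.1)
  intro p hp
  obtain ⟨x, t⟩ := p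
  have ht : (0 : ℝ) < t := hΩsub hp
  have htne : t ≠ 0 := ne_of_gt ht
  have hRHSfun : (fun y => K (u (y, t)) * deriv (fun z => u (z, t)) y)
      =ᶠ[nhds x] gxFun α a b t := by
    have hop : IsOpen {y : ℝ | (y, t) ∈ Ω} :=
      hΩ.preimage (continuous_id.prodMk continuous_const)
    filter_upwards [hop.mem_nhds hp] with y hy
    rw [(hux (y, t) hy).deriv]
    exact key_x (y, t) hy
  have hut : HasDerivAt (fun s => u (x, s)) (fderiv ℝ u (x, t) (0, 1)) t :=
    (hudiff (x, t) hp).comp_hasDerivAt t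
      ((hasDerivAt_const t x).prodMk (hasDerivAt_id t))
  have key_t : K (u (x, t)) * fderiv ℝ u (x, t) (0, 1) = gtVal α a b t x := by
    have hd2 : HasDerivAt (fun s => F (u (x, s)))
        (K (u (x, t)) * fderiv ℝ u (x, t) (0, 1)) t :=
      (hF (u (x, t))).comp t hut
    have hEq2 : (fun s => F (u (x, s))) =ᶠ[nhds t]
        (fun s => (a * x / s + b) * s ^ (-(1 / 2) : ℝ) *
          Real.exp (-α * x ^ 2 / (4 * s))) := by
      have hop : IsOpen {s : ℝ | (x, s) ∈ Ω} :=
        hΩ.preimage (continuous_const.prodMk continuous_id)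
      filter_upwards [hop.mem_nhds hp] with s hs
      exact hrel (x, s) hs
    exact (hd2.congr_of_eventuallyEq hEq2.symm).unique (hasDerivAt_gt α a b x t ht)
  show α * K (u (x, t)) * deriv (fun s => u ((x, t).1, s)) (x, t).2
      = deriv (fun y => K (u (y, (x, t).2)) * deriv (fun z => u (z, (x, t).2)) y) (x, t).1
  simp only
  rw [hRHSfun.deriv_eq, (hasDerivAt_gx α a b t htne x).deriv, hut.deriv]
  calc α * K (u (x, t)) * fderiv ℝ u (x, t) (0, 1)
      = α * (K (u (x, t)) * fderiv ℝ u (x, t) (0, 1)) := by ring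
    _ = α * gtVal α a b t x := by rw [key_t]
    _ = gxxVal α a b t x := key_algebra α a b t x ht
end

section
/- Let α, D̃ be real constants, K : ℝ → ℝ continuously differentiable, I ⊆ ℝ an open interval, and ψ : ℝ → ℝ continuously differentiable on I satisfying K(ψ(ξ))·ψ'(ξ) = D̃·exp( -α ξ²/4 ) for all ξ ∈ I. Then u(x,t) := ψ(x/√t) satisfies the nonlinear heat–diffusion equation C(u)u_t = (K(u)u_x)_x with C = αK at every point (x,t) with t > 0 and x/√t ∈ I. (Invariant solution associated with the generator X̄₂ = (x/2)∂_x + t∂_t in Case 2.) -/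
/-- Invariant solution associated with the generator `X̄₂ = (x/2)∂_x + t∂_t` in Case 2
(`C = αK`): if `K(ψ)ψ' = D̃·exp(-αξ²/4)` on an open interval, then `u(x,t) = ψ(x/√t)`
solves `αK(u)u_t = (K(u)u_x)_x` for `t > 0`, `x/√t` in the interval. -/
theorem stmt11 (α Dt : ℝ) (K : ℝ → ℝ) (hK : ContDiff ℝ 1 K)
    (a b : ℝ) (ψ : ℝ → ℝ) (hψ : ContDiffOn ℝ 1 ψ (Set.Ioo a b))
    (hrel : ∀ ξ ∈ Set.Ioo a b,
      K (ψ ξ) * deriv ψ ξ = Dt * Real.exp (-α * ξ ^ 2 / 4)) :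
    ∀ x t : ℝ, 0 < t → x / Real.sqrt t ∈ Set.Ioo a b →
      heatEqAt (fun y => α * K y) K (fun p => ψ (p.1 / Real.sqrt p.2)) (x, t) := by
  intro x t ht hmem
  set s := Real.sqrt t with hs_def
  have hs : 0 < s := Real.sqrt_pos.2 ht
  have hs2 : s ^ 2 = t := Real.sq_sqrt ht.le
  have hψdiff : ∀ ξ ∈ Set.Ioo a b, HasDerivAt ψ (deriv ψ ξ) ξ := by
    intro ξ hξ
    have := (hψ.differentiableOn one_ne_zero ξ hξ).differentiableAt
      (isOpen_Ioo.mem_nhds hξ)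
    exact this.hasDerivAt
  -- derivative in time
  have hτ : HasDerivAt (fun τ : ℝ => x / Real.sqrt τ)
      ((0 * s - x * (1 / (2 * s))) / s ^ 2) t := by
    exact (hasDerivAt_const t x).div (Real.hasDerivAt_sqrt ht.ne') hs.ne'
  have hut : HasDerivAt (fun τ : ℝ => ψ (x / Real.sqrt τ))
      (deriv ψ (x / s) * ((0 * s - x * (1 / (2 * s))) / s ^ 2)) t :=
    (hψdiff _ hmem).comp t hτ
  -- spatial structure: on a neighborhood of x, the flux equals the exponential
  have hopen : IsOpen {y : ℝ | y / s ∈ Set.Ioo a b} :=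
    isOpen_Ioo.preimage (continuous_id.div_const s)
  have hEv : (fun y => K (ψ (y / s)) * deriv (fun z => ψ (z / s)) y)
      =ᶠ[nhds x] (fun y => Dt * Real.exp (-α * (y / s) ^ 2 / 4) * s⁻¹) := by
    filter_upwards [hopen.mem_nhds hmem] with y hy
    have hinner : HasDerivAt (fun z : ℝ => ψ (z / s)) (deriv ψ (y / s) * (1 / s)) y :=
      (hψdiff _ hy).comp y ((hasDerivAt_id y).div_const s)
    rw [hinner.deriv]
    have := hrel (y / s) hy
    rw [← mul_assoc, this]
    ring
  -- derivative of the exponential expression at x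
  have h1 : HasDerivAt (fun y : ℝ => y / s) (1 / s) x := by
    simpa using (hasDerivAt_id x).div_const s
  have h2 : HasDerivAt (fun y : ℝ => -α * (y / s) ^ 2 / 4)
      (-α * (2 * (x / s) ^ 1 * (1 / s)) / 4) x :=
    ((h1.pow 2).const_mul (-α)).div_const 4
  have h3 : HasDerivAt (fun y : ℝ => Dt * Real.exp (-α * (y / s) ^ 2 / 4) * s⁻¹)
      (Dt * (Real.exp (-α * (x / s) ^ 2 / 4) * (-α * (2 * (x / s) ^ 1 * (1 / s)) / 4)) * s⁻¹) x :=
    ((h2.exp).const_mul Dt).mul_const s⁻¹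
  show α * K (ψ (x / s)) * deriv (fun τ => ψ (x / Real.sqrt τ)) t = _
  rw [hut.deriv, hEv.deriv_eq, h3.deriv]
  have hrelx := hrel (x / s) hmem
  have key : α * K (ψ (x / s)) * (deriv ψ (x / s) * ((0 * s - x * (1 / (2 * s))) / s ^ 2))
      = α * ((0 * s - x * (1 / (2 * s))) / s ^ 2) * (K (ψ (x / s)) * deriv ψ (x / s)) := by
    ring
  rw [key, hrelx]
  field_simp
  ring
end

section
/- Let α, ε be real constants, K : ℝ → ℝ continuously differentiable, and F an antiderivative of K (F' = K). Let Ω ⊆ ℝ² be open and u : ℝ × ℝ → ℝ twice continuously differentiable on Ω satisfying the nonlinear heat–diffusion equation C(u)u_t = (K(u)u_x)_x with C = αK on Ω. Let v : ℝ × ℝ → ℝ be twice continuously differentiable on Ω' := {(x,t) : (x-εt, t) ∈ Ω} and satisfy F(v(x,t)) = F(u(x-εt, t))·exp( -(αε/2)(x-εt) - αε²t/4 ) on Ω'. Then v satisfies C(v)v_t = (K(v)v_x)_x at every point of Ω'. (Invariance under the one-parameter Galilean-type group S̄₃ generated by X̄₃ = t∂_x - (αx∫K du/(2K))∂_u.)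 -/
private lemma lineX {f : ℝ × ℝ → ℝ} {a b : ℝ} (hf : DifferentiableAt ℝ f (a, b)) :
    HasDerivAt (fun y => f (y, b)) (fderiv ℝ f (a, b) (1, 0)) a := by
  have h := hf.hasFDerivAt.comp_hasDerivAt a
    (HasDerivAt.prodMk (hasDerivAt_id' (x := a)) (hasDerivAt_const a b))
  simpa [Function.comp_def] using h

private lemma lineT {f : ℝ × ℝ → ℝ} {a b : ℝ} (hf : DifferentiableAt ℝ f (a, b)) :
    HasDerivAt (fun s => f (a, s)) (fderiv ℝ f (a, b) (0, 1)) b := by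
  have h := hf.hasFDerivAt.comp_hasDerivAt b
    (HasDerivAt.prodMk (hasDerivAt_const b a) (hasDerivAt_id' (x := b)))
  simpa [Function.comp_def] using h



/-- Invariance under the Galilean-type group `S̄₃` generated by
`X̄₃ = t∂_x - (αx∫K du/(2K))∂_u` in Case 2 (`C = αK`): if `u` solves the equation and
`F(v(x,t)) = F(u(x-εt,t))·exp(-(αε/2)(x-εt) - αε²t/4)` (where `F' = K`), then `v`
also solves it on the transformed domain. -/
theorem stmt12 (α ε : ℝ) (K : ℝ → ℝ) (hK : ContDiff ℝ 1 K)
    (F : ℝ → ℝ) (hF : ∀ y : ℝ, HasDerivAt F (K y) y)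
    (Ω : Set (ℝ × ℝ)) (hΩ : IsOpen Ω)
    (u : ℝ × ℝ → ℝ) (hu : ContDiffOn ℝ 2 u Ω)
    (hpde : ∀ p ∈ Ω, heatEqAt (fun y => α * K y) K u p)
    (v : ℝ × ℝ → ℝ)
    (hv : ContDiffOn ℝ 2 v {p : ℝ × ℝ | (p.1 - ε * p.2, p.2) ∈ Ω})
    (hvrel : ∀ p : ℝ × ℝ, (p.1 - ε * p.2, p.2) ∈ Ω →
      F (v p) = F (u (p.1 - ε * p.2, p.2)) *
        Real.exp (-(α * ε / 2) * (p.1 - ε * p.2) - α * ε ^ 2 * p.2 / 4)) :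
    ∀ p : ℝ × ℝ, (p.1 - ε * p.2, p.2) ∈ Ω → heatEqAt (fun y => α * K y) K v p := by
  have hΩ' : IsOpen {p : ℝ × ℝ | (p.1 - ε * p.2, p.2) ∈ Ω} :=
    hΩ.preimage ((continuous_fst.sub (continuous_const.mul continuous_snd)).prodMk
      continuous_snd)
  have hudiff : ∀ q ∈ Ω, DifferentiableAt ℝ u q := fun q hq =>
    (hu.differentiableOn (by norm_num)).differentiableAt (hΩ.mem_nhds hq)
  have hvdiff : ∀ q ∈ {p : ℝ × ℝ | (p.1 - ε * p.2, p.2) ∈ Ω}, DifferentiableAt ℝ v q :=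
    fun q hq => (hv.differentiableOn (by norm_num)).differentiableAt (hΩ'.mem_nhds hq)
  have hAc : ContDiffOn ℝ 1 (fun q => K (u q) * fderiv ℝ u q (1, 0)) Ω :=
    (hK.comp_contDiffOn (hu.of_le one_le_two)).mul
      ((hu.fderiv_of_isOpen hΩ (by norm_num)).clm_apply contDiffOn_const)
  have hAdiff : ∀ q ∈ Ω, DifferentiableAt ℝ (fun q => K (u q) * fderiv ℝ u q (1, 0)) q :=
    fun q hq => (hAc.differentiableOn one_ne_zero).differentiableAt (hΩ.mem_nhds hq)
  -- slices
  have hsX : ∀ (s : Set (ℝ × ℝ)), IsOpen s → ∀ a b : ℝ, (a, b) ∈ s →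
      ∀ᶠ y in nhds a, (y, b) ∈ s := fun s hs a b hab =>
    (hs.preimage (continuous_id.prodMk continuous_const)).mem_nhds hab
  have hsT : ∀ (s : Set (ℝ × ℝ)), IsOpen s → ∀ a b : ℝ, (a, b) ∈ s →
      ∀ᶠ y in nhds b, (a, y) ∈ s := fun s hs a b hab =>
    (hs.preimage (continuous_const.prodMk continuous_id)).mem_nhds hab
  -- the x-derivative identity, at every point of Ω'
  have Ix : ∀ a b : ℝ, (a - ε * b, b) ∈ Ω →
      K (v (a, b)) * fderiv ℝ v (a, b) (1, 0) =
        (K (u (a - ε * b, b)) * fderiv ℝ u (a - ε * b, b) (1, 0)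
          - α * ε / 2 * F (u (a - ε * b, b))) *
        Real.exp (-(α * ε / 2) * (a - ε * b) - α * ε ^ 2 * b / 4) := by
    intro a b hab
    have hvx : HasDerivAt (fun y => F (v (y, b))) (K (v (a, b)) * fderiv ℝ v (a, b) (1, 0)) a :=
      (hF (v (a, b))).comp a (lineX (hvdiff _ hab))
    have hshift : HasDerivAt (fun y : ℝ => y - ε * b) 1 a := (hasDerivAt_id' a).sub_const _
    have hu2 : HasDerivAt (fun y => u (y - ε * b, b)) (fderiv ℝ u (a - ε * b, b) (1, 0) * 1) a :=
      by have := (lineX (hudiff _ hab)).comp a hshift; exact this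
    have hu3 : HasDerivAt (fun y => F (u (y - ε * b, b)))
        (K (u (a - ε * b, b)) * (fderiv ℝ u (a - ε * b, b) (1, 0) * 1)) a :=
      (hF (u (a - ε * b, b))).comp a hu2
    have hE : HasDerivAt (fun y : ℝ => Real.exp (-(α * ε / 2) * (y - ε * b) - α * ε ^ 2 * b / 4))
        (Real.exp (-(α * ε / 2) * (a - ε * b) - α * ε ^ 2 * b / 4) * (-(α * ε / 2) * 1)) a :=
      ((hshift.const_mul (-(α * ε / 2))).sub_const _).exp
    have hR := hu3.mul hE
    have hev : (fun y => F (v (y, b))) =ᶠ[nhds a]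
        (fun y => F (u (y - ε * b, b)) *
          Real.exp (-(α * ε / 2) * (y - ε * b) - α * ε ^ 2 * b / 4)) := by
      filter_upwards [hsX _ hΩ' a b hab] with y hy
      exact hvrel (y, b) hy
    have key := hvx.unique (hR.congr_of_eventuallyEq hev)
    rw [key]; ring
  intro p hp
  obtain ⟨x, t⟩ := p
  simp only [Set.mem_setOf_eq] at hp
  unfold heatEqAt
  simp only
  -- LHS : the t-derivative identity at (x,t)
  have hvt : HasDerivAt (fun s => F (v (x, s))) (K (v (x, t)) * fderiv ℝ v (x, t) (0, 1)) t :=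
    (hF (v (x, t))).comp t (lineT (hvdiff _ hp))
  have hc1 : HasDerivAt (fun s : ℝ => x - ε * s) (-(ε * 1)) t :=
    HasDerivAt.const_sub x ((hasDerivAt_id' t).const_mul ε)
  have hcurve : HasDerivAt (fun s : ℝ => ((x - ε * s : ℝ), s)) ((-(ε * 1) : ℝ), (1 : ℝ)) t :=
    HasDerivAt.prodMk hc1 (hasDerivAt_id' t)
  have hmov : HasDerivAt (fun s => u (x - ε * s, s))
      (fderiv ℝ u (x - ε * t, t) ((-(ε * 1) : ℝ), (1 : ℝ))) t := by
    have := (hudiff _ hp).hasFDerivAt.comp_hasDerivAt_of_eq t hcurve rfl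
    simpa [Function.comp_def] using this
  have hdir : fderiv ℝ u (x - ε * t, t) ((-(ε * 1) : ℝ), (1 : ℝ)) =
      -ε * fderiv ℝ u (x - ε * t, t) (1, 0) + fderiv ℝ u (x - ε * t, t) (0, 1) := by
    have h : ((-(ε * 1) : ℝ), (1 : ℝ)) = (-ε) • ((1 : ℝ), (0 : ℝ)) + ((0 : ℝ), (1 : ℝ)) := by
      norm_num
    rw [h, map_add, map_smul, smul_eq_mul]
  have hut : HasDerivAt (fun s => F (u (x - ε * s, s)))
      (K (u (x - ε * t, t)) * fderiv ℝ u (x - ε * t, t) ((-(ε * 1) : ℝ), (1 : ℝ))) t :=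
    (hF (u (x - ε * t, t))).comp t hmov
  have hEt : HasDerivAt (fun s : ℝ => Real.exp (-(α * ε / 2) * (x - ε * s) - α * ε ^ 2 * s / 4))
      (Real.exp (-(α * ε / 2) * (x - ε * t) - α * ε ^ 2 * t / 4) *
        (-(α * ε / 2) * -(ε * 1) - α * ε ^ 2 * 1 / 4)) t :=
    ((hc1.const_mul (-(α * ε / 2))).sub
      (((hasDerivAt_id' (x := t)).const_mul (α * ε ^ 2)).div_const 4)).exp
  have hRt := hut.mul hEt
  have hevt : (fun s => F (v (x, s))) =ᶠ[nhds t]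
      (fun s => F (u (x - ε * s, s)) *
        Real.exp (-(α * ε / 2) * (x - ε * s) - α * ε ^ 2 * s / 4)) := by
    filter_upwards [hsT _ hΩ' x t hp] with s hs
    exact hvrel (x, s) hs
  have It := hvt.unique (hRt.congr_of_eventuallyEq hevt)
  rw [hdir] at It
  -- rewrite the v-LHS deriv
  rw [(lineT (hvdiff _ hp)).deriv]
  -- RHS: replace the inner function by its closed form G1
  have hev1 : (fun y => K (v (y, t)) * deriv (fun z => v (z, t)) y) =ᶠ[nhds x]
      (fun y => (K (u (y - ε * t, t)) * fderiv ℝ u (y - ε * t, t) (1, 0)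
          - α * ε / 2 * F (u (y - ε * t, t))) *
        Real.exp (-(α * ε / 2) * (y - ε * t) - α * ε ^ 2 * t / 4)) := by
    filter_upwards [hsX _ hΩ' x t hp] with y hy
    rw [(lineX (hvdiff _ hy)).deriv]
    exact Ix y t hy
  rw [hev1.deriv_eq]
  -- differentiate G1
  have hshift : HasDerivAt (fun y : ℝ => y - ε * t) 1 x := (hasDerivAt_id' x).sub_const _
  have hA0 : HasDerivAt (fun z => K (u (z, t)) * fderiv ℝ u (z, t) (1, 0))
      (fderiv ℝ (fun q => K (u q) * fderiv ℝ u q (1, 0)) (x - ε * t, t) (1, 0)) (x - ε * t) :=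
    lineX (hAdiff _ hp)
  -- use the PDE for u to identify A' := the above fderiv value
  have hApde : fderiv ℝ (fun q => K (u q) * fderiv ℝ u q (1, 0)) (x - ε * t, t) (1, 0) =
      α * K (u (x - ε * t, t)) * fderiv ℝ u (x - ε * t, t) (0, 1) := by
    have h := hpde _ hp
    unfold heatEqAt at h
    simp only at h
    have hev2 : (fun y => K (u (y, t)) * deriv (fun z => u (z, t)) y) =ᶠ[nhds (x - ε * t)]
        (fun z => K (u (z, t)) * fderiv ℝ u (z, t) (1, 0)) := by
      filter_upwards [hsX _ hΩ _ t hp] with y hy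
      rw [(lineX (hudiff _ hy)).deriv]
    rw [hev2.deriv_eq, hA0.deriv, (lineT (hudiff _ hp)).deriv] at h
    linarith [h]
  rw [hApde] at hA0
  have hFu : HasDerivAt (fun z => F (u (z, t)))
      (K (u (x - ε * t, t)) * fderiv ℝ u (x - ε * t, t) (1, 0)) (x - ε * t) :=
    (hF (u (x - ε * t, t))).comp (x - ε * t) (lineX (hudiff _ hp))
  have hInner : HasDerivAt
      (fun y => K (u (y - ε * t, t)) * fderiv ℝ u (y - ε * t, t) (1, 0)
        - α * ε / 2 * F (u (y - ε * t, t)))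
      ((α * K (u (x - ε * t, t)) * fderiv ℝ u (x - ε * t, t) (0, 1)
        - α * ε / 2 * (K (u (x - ε * t, t)) * fderiv ℝ u (x - ε * t, t) (1, 0))) * 1) x :=
    by have := ((hA0.sub (hFu.const_mul (α * ε / 2))).comp x hshift); exact this
  have hEx : HasDerivAt (fun y : ℝ => Real.exp (-(α * ε / 2) * (y - ε * t) - α * ε ^ 2 * t / 4))
      (Real.exp (-(α * ε / 2) * (x - ε * t) - α * ε ^ 2 * t / 4) * (-(α * ε / 2) * 1)) x :=
    ((hshift.const_mul (-(α * ε / 2))).sub_const _).exp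
  have hD := (hInner.mul hEx).deriv; simp only [Pi.mul_def] at hD
  rw [hD]
  linear_combination α * It
end

section
/- Let α, ε be real constants, K : ℝ → ℝ continuously differentiable, and F an antiderivative of K (F' = K). Let Ω ⊆ ℝ² be open and u : ℝ × ℝ → ℝ twice continuously differentiable on Ω satisfying the nonlinear heat–diffusion equation C(u)u_t = (K(u)u_x)_x with C = αK on Ω. Let v : ℝ × ℝ → ℝ be twice continuously differentiable on Ω' := {(x,t) : 1+εt > 0 and (x/(1+εt), t/(1+εt)) ∈ Ω} and satisfy F(v(x,t)) = (1+εt)^{-1/2}·exp( -αεx²/(4(1+εt)) )·F(u( x/(1+εt), t/(1+εt) )) on Ω'. Then v satisfies C(v)v_t = (K(v)v_x)_x at every point of Ω'. (Invariance under the one-parameter projective group S̄₁ generated by X̄₁.) -/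
/-! Auxiliary definitions and lemmas -/

private lemma fderiv_pt_eval (f : ℝ × ℝ → ℝ) (q m : ℝ × ℝ) :
    fderiv ℝ f q m = m.1 * fderiv ℝ f q (1, 0) + m.2 * fderiv ℝ f q (0, 1) := by
  have hm : m = m.1 • ((1 : ℝ), (0 : ℝ)) + m.2 • ((0 : ℝ), (1 : ℝ)) := by
    simp [Prod.ext_iff]
  calc fderiv ℝ f q m
      = fderiv ℝ f q (m.1 • ((1:ℝ),(0:ℝ)) + m.2 • ((0:ℝ),(1:ℝ))) := by rw [← hm]
    _ = _ := by rw [map_add, map_smul, map_smul]; simp [smul_eq_mul]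

private lemma hasDerivAt_comp_curve {f : ℝ × ℝ → ℝ} {γ : ℝ → ℝ × ℝ} {m : ℝ × ℝ} {r : ℝ}
    (hγ : HasDerivAt γ m r) (hf : DifferentiableAt ℝ f (γ r)) :
    HasDerivAt (fun z => f (γ z))
      (m.1 * fderiv ℝ f (γ r) (1, 0) + m.2 * fderiv ℝ f (γ r) (0, 1)) r := by
  have h := hf.hasFDerivAt.comp_hasDerivAt r hγ
  rw [← fderiv_pt_eval f (γ r) m]
  exact h

private lemma mem_slice_nhds {S : Set (ℝ×ℝ)} (hS : IsOpen S) {x t : ℝ} (h : (x, t) ∈ S) :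
    ∀ᶠ y in nhds x, (y, t) ∈ S := by
  have hc : Continuous fun y : ℝ => (y, t) := continuous_id.prodMk continuous_const
  exact hc.continuousAt.preimage_mem_nhds (hS.mem_nhds h)

private lemma mem_slice_nhds_t {S : Set (ℝ×ℝ)} (hS : IsOpen S) {x t : ℝ} (h : (x, t) ∈ S) :
    ∀ᶠ τ in nhds t, (x, τ) ∈ S := by
  have hc : Continuous fun τ : ℝ => (x, τ) := continuous_const.prodMk continuous_id
  exact hc.continuousAt.preimage_mem_nhds (hS.mem_nhds h)

/-- the transformed domain -/
private def Od (ε : ℝ) (Ω : Set (ℝ × ℝ)) : Set (ℝ × ℝ) :=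
  {q : ℝ × ℝ | 0 < 1 + ε * q.2 ∧ (q.1 / (1 + ε * q.2), q.2 / (1 + ε * q.2)) ∈ Ω}

private lemma Od_isOpen (ε : ℝ) {Ω : Set (ℝ × ℝ)} (hΩ : IsOpen Ω) : IsOpen (Od ε Ω) := by
  have hU : IsOpen {q : ℝ × ℝ | 0 < 1 + ε * q.2} :=
    isOpen_lt continuous_const (continuous_const.add (continuous_const.mul continuous_snd))
  have hden : ContinuousOn (fun q : ℝ × ℝ => 1 + ε * q.2) {q : ℝ × ℝ | 0 < 1 + ε * q.2} :=
    (continuous_const.add (continuous_const.mul continuous_snd)).continuousOn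
  have hφ : ContinuousOn (fun q : ℝ × ℝ => (q.1 / (1 + ε * q.2), q.2 / (1 + ε * q.2)))
      {q : ℝ × ℝ | 0 < 1 + ε * q.2} := by
    exact ContinuousOn.prodMk
      (continuous_fst.continuousOn.div hden (fun q hq => ne_of_gt hq))
      (continuous_snd.continuousOn.div hden (fun q hq => ne_of_gt hq))
  have h2 := hφ.isOpen_inter_preimage hU hΩ
  have h3 : Od ε Ω = {q : ℝ × ℝ | 0 < 1 + ε * q.2} ∩
      (fun q : ℝ × ℝ => (q.1 / (1 + ε * q.2), q.2 / (1 + ε * q.2))) ⁻¹' Ω := rfl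
  rw [h3]; exact h2

/-- the transformed function -/
private noncomputable def Wfun (α ε : ℝ) (w : ℝ × ℝ → ℝ) (q : ℝ × ℝ) : ℝ :=
  (1 + ε * q.2) ^ (-(1/2) : ℝ) * Real.exp (-α * ε * q.1 ^ 2 / (4 * (1 + ε * q.2))) *
    w (q.1 / (1 + ε * q.2), q.2 / (1 + ε * q.2))

/-- the x-derivative of the transformed function -/
private noncomputable def XSlope (α ε : ℝ) (w : ℝ × ℝ → ℝ) (x t : ℝ) : ℝ :=
  (1 + ε * t) ^ (-(1/2) : ℝ) * Real.exp (-α * ε * x ^ 2 / (4 * (1 + ε * t))) *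
      (-(α * ε * x) / (2 * (1 + ε * t))) * w (x / (1 + ε * t), t / (1 + ε * t)) +
    (1 + ε * t) ^ (-(1/2) : ℝ) * Real.exp (-α * ε * x ^ 2 / (4 * (1 + ε * t))) *
      (1 / (1 + ε * t)) * fderiv ℝ w (x / (1 + ε * t), t / (1 + ε * t)) (1, 0)

private lemma hasDerivAt_Wfun_x (α ε : ℝ) (w : ℝ × ℝ → ℝ) {x t : ℝ}
    (hq1 : 0 < 1 + ε * t)
    (hw : DifferentiableAt ℝ w (x / (1 + ε * t), t / (1 + ε * t))) :
    HasDerivAt (fun z => Wfun α ε w (z, t)) (XSlope α ε w x t) x := by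
  have hs0 : (1 + ε * t) ≠ 0 := ne_of_gt hq1
  have hEin : HasDerivAt (fun z : ℝ => -α * ε * z ^ 2 / (4 * (1 + ε * t)))
      (-α * ε * (2 * x) / (4 * (1 + ε * t))) x := by
    have h0 := ((hasDerivAt_pow 2 x).const_mul (-α * ε)).div_const (4 * (1 + ε * t))
    refine h0.congr_deriv ?_
    push_cast
    ring
  have hE := hEin.exp
  have hγ : HasDerivAt (fun z : ℝ => (z / (1 + ε * t), t / (1 + ε * t)))
      ((1 / (1 + ε * t) : ℝ), (0 : ℝ)) x := by
    have h1 : HasDerivAt (fun z : ℝ => z / (1 + ε * t)) (1 / (1 + ε * t)) x := by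
      simpa using (hasDerivAt_id x).div_const (1 + ε * t)
    exact h1.prodMk (hasDerivAt_const _ _)
  have hm := hasDerivAt_comp_curve hγ hw
  have hprod := (hE.const_mul ((1 + ε * t) ^ (-(1/2) : ℝ))).mul hm
  have hfeq : (fun z => Wfun α ε w (z, t)) = fun z =>
      (1 + ε * t) ^ (-(1/2) : ℝ) * Real.exp (-α * ε * z ^ 2 / (4 * (1 + ε * t))) *
        w (z / (1 + ε * t), t / (1 + ε * t)) := by
    funext z; simp [Wfun]
  rw [hfeq]
  refine hprod.congr_deriv ?_
  simp only [XSlope]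
  field_simp
  ring

private lemma hasDerivAt_Wfun_t (α ε : ℝ) (w : ℝ × ℝ → ℝ) {x t : ℝ}
    (hq1 : 0 < 1 + ε * t)
    (hw : DifferentiableAt ℝ w (x / (1 + ε * t), t / (1 + ε * t))) :
    HasDerivAt (fun τ => Wfun α ε w (x, τ))
      ( (-(1/2) : ℝ) * (1 + ε * t) ^ ((-(1/2) : ℝ) - 1) * ε *
          Real.exp (-α * ε * x ^ 2 / (4 * (1 + ε * t))) * w (x / (1 + ε * t), t / (1 + ε * t))
        + (1 + ε * t) ^ (-(1/2) : ℝ) * Real.exp (-α * ε * x ^ 2 / (4 * (1 + ε * t))) *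
            (α * ε ^ 2 * x ^ 2 / (4 * (1 + ε * t) ^ 2)) * w (x / (1 + ε * t), t / (1 + ε * t))
        + (1 + ε * t) ^ (-(1/2) : ℝ) * Real.exp (-α * ε * x ^ 2 / (4 * (1 + ε * t))) *
            ( (-(ε * x) / (1 + ε * t) ^ 2) * fderiv ℝ w (x/(1+ε*t), t/(1+ε*t)) (1, 0)
              + (1 / (1 + ε * t) ^ 2) * fderiv ℝ w (x/(1+ε*t), t/(1+ε*t)) (0, 1) ) ) t := by
  have hs0 : (1 + ε * t) ≠ 0 := ne_of_gt hq1
  have hlin : HasDerivAt (fun τ : ℝ => 1 + ε * τ) ε t := by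
    simpa using ((hasDerivAt_id t).const_mul ε).const_add 1
  have hA : HasDerivAt (fun τ : ℝ => (1 + ε * τ) ^ (-(1/2) : ℝ))
      ((-(1/2) : ℝ) * (1 + ε * t) ^ ((-(1/2) : ℝ) - 1) * ε) t :=
    by
      have h := (Real.hasDerivAt_rpow_const (x := 1 + ε * t) (p := -(1/2)) (Or.inl hs0)).comp t hlin
      exact h
  have hr : HasDerivAt (fun τ : ℝ => -α * ε * x ^ 2 / (4 * (1 + ε * τ)))
      ((0 * (4 * (1 + ε * t)) - -α * ε * x ^ 2 * (4 * ε)) / (4 * (1 + ε * t)) ^ 2) t :=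
    (hasDerivAt_const t (-α * ε * x ^ 2)).div (hlin.const_mul 4) (mul_ne_zero four_ne_zero hs0)
  have hE := hr.exp
  have hc1 : HasDerivAt (fun τ : ℝ => x / (1 + ε * τ))
      ((0 * (1 + ε * t) - x * ε) / (1 + ε * t) ^ 2) t := (hasDerivAt_const t x).div hlin hs0
  have hc2 : HasDerivAt (fun τ : ℝ => τ / (1 + ε * τ))
      ((1 * (1 + ε * t) - t * ε) / (1 + ε * t) ^ 2) t := (hasDerivAt_id t).div hlin hs0
  have hγ := hc1.prodMk hc2
  have hm := hasDerivAt_comp_curve hγ hw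
  have hprod := (hA.mul hE).mul hm
  have hfeq : (fun τ => Wfun α ε w (x, τ)) = fun τ =>
      (1 + ε * τ) ^ (-(1/2) : ℝ) * Real.exp (-α * ε * x ^ 2 / (4 * (1 + ε * τ))) *
        w (x / (1 + ε * τ), τ / (1 + ε * τ)) := by
    funext τ; simp [Wfun]
  rw [hfeq]
  refine hprod.congr_deriv ?_
  simp only [Pi.mul_apply]
  field_simp
  ring

private lemma hasDerivAt_XSlope_x (α ε : ℝ) (w : ℝ × ℝ → ℝ) {x t : ℝ}
    (hq1 : 0 < 1 + ε * t)
    (hw : DifferentiableAt ℝ w (x / (1 + ε * t), t / (1 + ε * t)))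
    (hwx : DifferentiableAt ℝ (fun r => fderiv ℝ w r (1, 0)) (x / (1 + ε * t), t / (1 + ε * t))) :
    HasDerivAt (fun y => XSlope α ε w y t)
      ( (1 + ε * t) ^ (-(1/2) : ℝ) * Real.exp (-α * ε * x ^ 2 / (4 * (1 + ε * t))) *
          ((α * ε * x / (2 * (1 + ε * t))) ^ 2 - α * ε / (2 * (1 + ε * t))) *
          w (x / (1 + ε * t), t / (1 + ε * t))
        + (1 + ε * t) ^ (-(1/2) : ℝ) * Real.exp (-α * ε * x ^ 2 / (4 * (1 + ε * t))) *
          (-(α * ε * x) / (1 + ε * t) ^ 2) * fderiv ℝ w (x / (1 + ε * t), t / (1 + ε * t)) (1, 0)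
        + (1 + ε * t) ^ (-(1/2) : ℝ) * Real.exp (-α * ε * x ^ 2 / (4 * (1 + ε * t))) *
          (1 / (1 + ε * t) ^ 2) *
          fderiv ℝ (fun r => fderiv ℝ w r (1, 0)) (x / (1 + ε * t), t / (1 + ε * t)) (1, 0) ) x := by
  have hs0 : (1 + ε * t) ≠ 0 := ne_of_gt hq1
  have hEin : HasDerivAt (fun z : ℝ => -α * ε * z ^ 2 / (4 * (1 + ε * t)))
      (-α * ε * (2 * x) / (4 * (1 + ε * t))) x := by
    have h0 := ((hasDerivAt_pow 2 x).const_mul (-α * ε)).div_const (4 * (1 + ε * t))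
    refine h0.congr_deriv ?_
    push_cast
    ring
  have hE := hEin.exp
  have hB : HasDerivAt (fun y : ℝ => -(α * ε * y) / (2 * (1 + ε * t)))
      (-(α * ε) / (2 * (1 + ε * t))) x := by
    have h1 := (((hasDerivAt_id x).const_mul (α * ε)).neg).div_const (2 * (1 + ε * t))
    refine h1.congr_deriv ?_
    ring
  have hγ : HasDerivAt (fun z : ℝ => (z / (1 + ε * t), t / (1 + ε * t)))
      ((1 / (1 + ε * t) : ℝ), (0 : ℝ)) x := by
    have h1 : HasDerivAt (fun z : ℝ => z / (1 + ε * t)) (1 / (1 + ε * t)) x := by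
      simpa using (hasDerivAt_id x).div_const (1 + ε * t)
    exact h1.prodMk (hasDerivAt_const _ _)
  have hC := hasDerivAt_comp_curve hγ hw
  have hD := hasDerivAt_comp_curve hγ hwx
  have term1 := ((hE.const_mul ((1 + ε * t) ^ (-(1/2) : ℝ))).mul hB).mul hC
  have term2 := ((hE.const_mul ((1 + ε * t) ^ (-(1/2) : ℝ))).mul_const (1 / (1 + ε * t))).mul hD
  have hsum := term1.add term2
  have hfeq : (fun y => XSlope α ε w y t) = fun y =>
      (1 + ε * t) ^ (-(1/2) : ℝ) * Real.exp (-α * ε * y ^ 2 / (4 * (1 + ε * t))) *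
        (-(α * ε * y) / (2 * (1 + ε * t))) * w (y / (1 + ε * t), t / (1 + ε * t)) +
      (1 + ε * t) ^ (-(1/2) : ℝ) * Real.exp (-α * ε * y ^ 2 / (4 * (1 + ε * t))) *
        (1 / (1 + ε * t)) * fderiv ℝ w (y / (1 + ε * t), t / (1 + ε * t)) (1, 0) := by
    funext y; simp [XSlope]
  rw [hfeq]
  refine hsum.congr_deriv ?_
  simp only [Pi.mul_apply]
  field_simp
  ring

/-- Invariance under the projective group `S̄₁` generated by `X̄₁` in Case 2 (`C = αK`):
if `u` solves the equation and
`F(v(x,t)) = (1+εt)^{-1/2}·exp(-αεx²/(4(1+εt)))·F(u(x/(1+εt), t/(1+εt)))`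
(where `F' = K`), then `v` also solves it on the transformed domain. -/
theorem stmt13 (α ε : ℝ) (K : ℝ → ℝ) (hK : ContDiff ℝ 1 K)
    (F : ℝ → ℝ) (hF : ∀ y : ℝ, HasDerivAt F (K y) y)
    (Ω : Set (ℝ × ℝ)) (hΩ : IsOpen Ω)
    (u : ℝ × ℝ → ℝ) (hu : ContDiffOn ℝ 2 u Ω)
    (hpde : ∀ p ∈ Ω, heatEqAt (fun y => α * K y) K u p)
    (v : ℝ × ℝ → ℝ)
    (hv : ContDiffOn ℝ 2 v {p : ℝ × ℝ |
      0 < 1 + ε * p.2 ∧ (p.1 / (1 + ε * p.2), p.2 / (1 + ε * p.2)) ∈ Ω})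
    (hvrel : ∀ p : ℝ × ℝ, 0 < 1 + ε * p.2 →
      (p.1 / (1 + ε * p.2), p.2 / (1 + ε * p.2)) ∈ Ω →
      F (v p) = (1 + ε * p.2) ^ (-(1 / 2) : ℝ) *
        Real.exp (-α * ε * p.1 ^ 2 / (4 * (1 + ε * p.2))) *
        F (u (p.1 / (1 + ε * p.2), p.2 / (1 + ε * p.2)))) :
    ∀ p : ℝ × ℝ, 0 < 1 + ε * p.2 →
      (p.1 / (1 + ε * p.2), p.2 / (1 + ε * p.2)) ∈ Ω →
      heatEqAt (fun y => α * K y) K v p := by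
  intro p hp1 hp2
  obtain ⟨x, t⟩ := p
  dsimp only at hp1 hp2
  -- the composite w = F ∘ u
  set w : ℝ × ℝ → ℝ := fun q => F (u q) with hw_def
  have hFC2 : ContDiff ℝ 2 F := by
    have hdF : deriv F = K := funext fun y => (hF y).deriv
    have h2 : ContDiff ℝ (1 + 1) F := by
      rw [contDiff_succ_iff_deriv]
      refine ⟨fun y => (hF y).differentiableAt, by simp, ?_⟩
      rw [hdF]; exact hK
    have h12 : ((2 : ℕ) : WithTop ℕ∞) = 1 + 1 := by norm_num
    rw [show ((2 : ℕ) : WithTop ℕ∞) = (2 : WithTop ℕ∞) from rfl] at h12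
    rw [h12]; exact h2
  have hw2 : ContDiffOn ℝ 2 w Ω := hFC2.comp_contDiffOn hu
  have hwd : ∀ a b : ℝ, (a, b) ∈ Ω → DifferentiableAt ℝ w (a, b) := fun a b h =>
    ((hw2.differentiableOn two_ne_zero).differentiableAt (hΩ.mem_nhds h))
  have hud : ∀ a b : ℝ, (a, b) ∈ Ω → DifferentiableAt ℝ u (a, b) := fun a b h =>
    ((hu.differentiableOn two_ne_zero).differentiableAt (hΩ.mem_nhds h))
  have hwxd : ∀ a b : ℝ, (a, b) ∈ Ω →
      DifferentiableAt ℝ (fun r => fderiv ℝ w r (1, 0)) (a, b) := by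
    have h1 : ContDiffOn ℝ 1 (fun r => fderiv ℝ w r) Ω := hw2.fderiv_of_isOpen hΩ (by norm_num)
    have h2 : DifferentiableOn ℝ (fun r => fderiv ℝ w r (1, 0)) Ω :=
      ((ContinuousLinearMap.apply ℝ ℝ ((1 : ℝ), (0 : ℝ))).contDiff.comp_contDiffOn
        h1).differentiableOn one_ne_zero
    exact fun a b h => h2.differentiableAt (hΩ.mem_nhds h)
  -- the pde satisfied by w, in fderiv form
  have hfw : ∀ a b : ℝ, (a, b) ∈ Ω →
      fderiv ℝ w (a, b) = K (u (a, b)) • fderiv ℝ u (a, b) := by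
    intro a b h
    have h1 : HasFDerivAt w (K (u (a, b)) • fderiv ℝ u (a, b)) (a, b) :=
      (hF (u (a, b))).comp_hasFDerivAt (a, b) ((hud a b h).hasFDerivAt)
    exact h1.fderiv
  have husl : ∀ a b : ℝ, (a, b) ∈ Ω →
      HasDerivAt (fun z => u (z, b)) (fderiv ℝ u (a, b) (1, 0)) a := by
    intro a b h
    have hγ : HasDerivAt (fun z : ℝ => (z, b)) ((1 : ℝ), (0 : ℝ)) a :=
      (hasDerivAt_id a).prodMk (hasDerivAt_const _ _)
    simpa using hasDerivAt_comp_curve hγ (hud a b h)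
  have hpdew : ∀ a b : ℝ, (a, b) ∈ Ω →
      fderiv ℝ (fun r => fderiv ℝ w r (1, 0)) (a, b) (1, 0) = α * fderiv ℝ w (a, b) (0, 1) := by
    intro a b hab
    have hut : HasDerivAt (fun s' => u (a, s')) (fderiv ℝ u (a, b) (0, 1)) b := by
      have hγ : HasDerivAt (fun τ : ℝ => ((a : ℝ), τ)) ((0 : ℝ), (1 : ℝ)) b :=
        (hasDerivAt_const _ _).prodMk (hasDerivAt_id _)
      simpa using hasDerivAt_comp_curve hγ (hud a b hab)
    have h := hpde (a, b) hab
    unfold heatEqAt at h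
    dsimp only at h
    rw [hut.deriv] at h
    have hev : (fun y => K (u (y, b)) * deriv (fun z => u (z, b)) y) =ᶠ[nhds a]
        (fun y => fderiv ℝ w (y, b) (1, 0)) := by
      filter_upwards [mem_slice_nhds hΩ hab] with y hy
      rw [(husl y b hy).deriv, hfw y b hy]
      simp
    rw [hev.deriv_eq] at h
    have hwsl2 : HasDerivAt (fun y => fderiv ℝ w (y, b) (1, 0))
        (fderiv ℝ (fun r => fderiv ℝ w r (1, 0)) (a, b) (1, 0)) a := by
      have hγ : HasDerivAt (fun z : ℝ => (z, b)) ((1 : ℝ), (0 : ℝ)) a :=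
        (hasDerivAt_id a).prodMk (hasDerivAt_const _ _)
      simpa using hasDerivAt_comp_curve hγ (hwxd a b hab)
    rw [hwsl2.deriv] at h
    rw [← h, hfw a b hab]
    simp
    ring
  -- the transformed domain
  have hO : IsOpen (Od ε Ω) := Od_isOpen ε hΩ
  have hvO : ContDiffOn ℝ 2 v (Od ε Ω) := hv
  have hvd : ∀ a b : ℝ, (a, b) ∈ Od ε Ω → DifferentiableAt ℝ v (a, b) := fun a b h =>
    ((hvO.differentiableOn two_ne_zero).differentiableAt (hO.mem_nhds h))
  have hWeq : ∀ q ∈ Od ε Ω, F (v q) = Wfun α ε w q := by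
    intro q hq
    rw [hvrel q hq.1 hq.2]
    simp [Wfun, hw_def]
  have hmemO : (x, t) ∈ Od ε Ω := ⟨hp1, hp2⟩
  -- time derivative of v at (x,t)
  have hvt : HasDerivAt (fun τ => v (x, τ)) (fderiv ℝ v (x, t) (0, 1)) t := by
    have hγ : HasDerivAt (fun τ : ℝ => ((x : ℝ), τ)) ((0 : ℝ), (1 : ℝ)) t :=
      (hasDerivAt_const _ _).prodMk (hasDerivAt_id _)
    simpa using hasDerivAt_comp_curve hγ (hvd x t hmemO)
  have hFvt : HasDerivAt (fun τ => F (v (x, τ))) (K (v (x, t)) * fderiv ℝ v (x, t) (0, 1)) t :=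
    (hF (v (x, t))).comp t hvt
  have hWt := hasDerivAt_Wfun_t α ε w hp1 (hwd _ _ hp2)
  have hevt : (fun τ => F (v (x, τ))) =ᶠ[nhds t] (fun τ => Wfun α ε w (x, τ)) := by
    filter_upwards [mem_slice_nhds_t hO hmemO] with τ hτ
    exact hWeq (x, τ) hτ
  have hTuniq := (hWt.congr_of_eventuallyEq hevt).unique hFvt
  -- x-derivative function of F ∘ v agrees with XSlope near x
  have hRHSev : (fun y => K (v (y, t)) * deriv (fun z => v (z, t)) y) =ᶠ[nhds x]
      (fun y => XSlope α ε w y t) := by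
    filter_upwards [mem_slice_nhds hO hmemO] with y hy
    have hγ : HasDerivAt (fun z : ℝ => (z, t)) ((1 : ℝ), (0 : ℝ)) y :=
      (hasDerivAt_id y).prodMk (hasDerivAt_const _ _)
    have hvsl : HasDerivAt (fun z => v (z, t)) (fderiv ℝ v (y, t) (1, 0)) y := by
      simpa using hasDerivAt_comp_curve hγ (hvd y t hy)
    have hFv : HasDerivAt (fun z => F (v (z, t)))
        (K (v (y, t)) * fderiv ℝ v (y, t) (1, 0)) y := (hF (v (y, t))).comp y hvsl
    have hWsl := hasDerivAt_Wfun_x α ε w hy.1 (hwd _ _ hy.2)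
    have hev2 : (fun z => F (v (z, t))) =ᶠ[nhds y] (fun z => Wfun α ε w (z, t)) := by
      filter_upwards [mem_slice_nhds hO hy] with z hz
      exact hWeq (z, t) hz
    have huniq := (hWsl.congr_of_eventuallyEq hev2).unique hFv
    rw [hvsl.deriv, ← huniq]
  -- conclude
  unfold heatEqAt
  dsimp only
  rw [hRHSev.deriv_eq, (hasDerivAt_XSlope_x α ε w hp1 (hwd _ _ hp2) (hwxd _ _ hp2)).deriv]
  rw [hvt.deriv, mul_assoc, ← hTuniq]
  rw [hpdew _ _ hp2]
  have hpow : (1 + ε * t) ^ ((-(1/2) : ℝ) - 1) = (1 + ε * t) ^ (-(1/2) : ℝ) / (1 + ε * t) := by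
    rw [Real.rpow_sub hp1, Real.rpow_one]
  rw [hpow]
  have hs0 : (1 + ε * t) ≠ 0 := ne_of_gt hp1
  field_simp
  ring
end

section
/- Let ρ, c₀, k₀ be positive real constants, β ≠ 0, D̂, Ê real constants, and set α := ρc₀/k₀. Define erf(z) := (2/√π)·∫₀^z exp(-s²) ds. Let Ω ⊆ ℝ × (0,∞) be open and u : ℝ × ℝ → ℝ twice continuously differentiable on Ω satisfying ( 1 + β·u(x,t) )² = D̂·erf( (√α·x)/(2√t) ) + Ê for all (x,t) ∈ Ω. Then u satisfies ρc₀(1+βu)·∂_t u = ∂_x( k₀(1+βu)·∂_x u ) at every point of Ω. (Similarity solution for linear-in-u coefficients, the case p = 1.) -/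
/-- Similarity solution for linear-in-`u` coefficients (`p = 1`): if
`(1+βu)² = D̂·erf(√α·x/(2√t)) + Ê` with `α = ρc₀/k₀`, then `u` solves
`ρc₀(1+βu)u_t = (k₀(1+βu)u_x)_x` on `Ω`. -/
theorem stmt16 (ρ c₀ k₀ β Dh Eh : ℝ)
    (hρ : 0 < ρ) (hc : 0 < c₀) (hk : 0 < k₀) (hβ : β ≠ 0)
    (α : ℝ) (hα : α = ρ * c₀ / k₀)
    (erf : ℝ → ℝ)
    (herf : ∀ z : ℝ, erf z = (2 / Real.sqrt Real.pi) * ∫ s in (0 : ℝ)..z, Real.exp (-s ^ 2))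
    (Ω : Set (ℝ × ℝ)) (hΩ : IsOpen Ω) (hΩsub : Ω ⊆ {p : ℝ × ℝ | 0 < p.2})
    (u : ℝ × ℝ → ℝ) (hu : ContDiffOn ℝ 2 u Ω)
    (hrel : ∀ p ∈ Ω, (1 + β * u p) ^ 2 =
      Dh * erf (Real.sqrt α * p.1 / (2 * Real.sqrt p.2)) + Eh) :
    ∀ p ∈ Ω,
      heatEqAt (fun y => ρ * c₀ * (1 + β * y)) (fun y => k₀ * (1 + β * y)) u p := by
  have hα0 : 0 < α := by rw [hα]; positivity
  have herf' : ∀ z : ℝ, HasDerivAt erf (2 / Real.sqrt Real.pi * Real.exp (-z ^ 2)) z := by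
    intro z
    have hc2 : Continuous fun s : ℝ => Real.exp (-s ^ 2) := by continuity
    have h1 := ((hc2.integral_hasStrictDerivAt 0 z).hasDerivAt).const_mul (2 / Real.sqrt Real.pi)
    have heq : erf = fun z : ℝ => (2 / Real.sqrt Real.pi) * ∫ s in (0:ℝ)..z, Real.exp (-s ^ 2) :=
      funext herf
    rw [heq]; exact h1
  have hdiff : ∀ q ∈ Ω, DifferentiableAt ℝ u q := fun q hq =>
    ((hu q hq).contDiffAt (hΩ.mem_nhds hq)).differentiableAt (by norm_num)
  rintro ⟨x, t⟩ hp
  show ρ * c₀ * (1 + β * u (x, t)) * deriv (fun s => u (x, s)) t =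
      deriv (fun y => k₀ * (1 + β * u (y, t)) * deriv (fun z => u (z, t)) y) x
  have ht : (0:ℝ) < t := hΩsub hp
  have hst : 0 < Real.sqrt t := Real.sqrt_pos.mpr ht
  set c : ℝ := Real.sqrt α / (2 * Real.sqrt t) with hcdef
  -- spatial derivative of the profile
  have hFx : ∀ y : ℝ, HasDerivAt (fun y : ℝ => Dh * erf (Real.sqrt α * y / (2 * Real.sqrt t)) + Eh)
      (Dh * (2 / Real.sqrt Real.pi * Real.exp (-(c * y) ^ 2) * c)) y := by
    intro y
    have hcy : HasDerivAt (fun y : ℝ => c * y) c y := by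
      simpa using (hasDerivAt_id y).const_mul c
    have h1 := (herf' (c * y)).comp y hcy
    have h2 := (h1.const_mul Dh).add_const Eh
    have harg : ∀ y : ℝ, Real.sqrt α * y / (2 * Real.sqrt t) = c * y := by
      intro y; rw [hcdef]; ring
    simp only [harg]
    exact h2
  -- second spatial derivative of the profile
  have hFxx : HasDerivAt (fun y : ℝ => Dh * (2 / Real.sqrt Real.pi * Real.exp (-(c * y) ^ 2) * c))
      (Dh * (2 / Real.sqrt Real.pi * (Real.exp (-(c * x) ^ 2) * (-((2:ℕ) * (c * x) ^ 1 * c))) * c)) x := by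
    have hcy : HasDerivAt (fun y : ℝ => c * y) c x := by
      simpa using (hasDerivAt_id x).const_mul c
    have hq := ((hcy.pow 2).neg).exp
    exact ((hq.const_mul (2 / Real.sqrt Real.pi)).mul_const c).const_mul Dh
  -- time derivative of the profile
  have hFt : HasDerivAt (fun s : ℝ => Dh * erf (Real.sqrt α * x / (2 * Real.sqrt s)) + Eh)
      (Dh * (2 / Real.sqrt Real.pi * Real.exp (-(Real.sqrt α * x / 2 * (Real.sqrt t)⁻¹) ^ 2)
        * (Real.sqrt α * x / 2 * (-(1 / (2 * Real.sqrt t)) / Real.sqrt t ^ 2)))) t := by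
    have hs : HasDerivAt Real.sqrt (1 / (2 * Real.sqrt t)) t := Real.hasDerivAt_sqrt ht.ne'
    have hsinv := hs.inv hst.ne'
    have hinner := hsinv.const_mul (Real.sqrt α * x / 2)
    have h1 := (herf' (Real.sqrt α * x / 2 * (Real.sqrt t)⁻¹)).comp t hinner
    have h2 := (h1.const_mul Dh).add_const Eh
    have harg : ∀ s : ℝ, Real.sqrt α * x / (2 * Real.sqrt s) = Real.sqrt α * x / 2 * (Real.sqrt s)⁻¹ := by
      intro s; ring
    simp only [harg]
    exact h2
  -- partial derivatives of u
  have hux : ∀ y : ℝ, (y, t) ∈ Ω →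
      HasDerivAt (fun z => u (z, t)) (deriv (fun z => u (z, t)) y) y := by
    intro y hy
    have h1 : DifferentiableAt ℝ (fun z : ℝ => u (z, t)) y :=
      (hdiff _ hy).comp y (differentiableAt_id.prodMk (differentiableAt_const t))
    exact h1.hasDerivAt
  have hut : HasDerivAt (fun s => u (x, s)) (deriv (fun s => u (x, s)) t) t := by
    have h1 : DifferentiableAt ℝ (fun s : ℝ => u (x, s)) t :=
      (hdiff _ hp).comp t ((differentiableAt_const x).prodMk differentiableAt_id)
    exact h1.hasDerivAt
  -- spatial relation
  have hspace : ∀ y : ℝ, (y, t) ∈ Ω →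
      k₀ * (1 + β * u (y, t)) * deriv (fun z => u (z, t)) y =
        k₀ / (2 * β) * (Dh * (2 / Real.sqrt Real.pi * Real.exp (-(c * y) ^ 2) * c)) := by
    intro y hy
    have h1 : HasDerivAt (fun z => (1 + β * u (z, t)) ^ 2)
        ((2:ℕ) * (1 + β * u (y, t)) ^ 1 * (β * deriv (fun z => u (z, t)) y)) y :=
      (((hux y hy).const_mul β).const_add 1).pow 2
    have hmem : ∀ᶠ z in nhds y, (z, t) ∈ Ω :=
      (continuousAt_id.prodMk continuousAt_const).preimage_mem_nhds (hΩ.mem_nhds hy)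
    have hev : (fun z => (1 + β * u (z, t)) ^ 2) =ᶠ[nhds y]
        fun z => Dh * erf (Real.sqrt α * z / (2 * Real.sqrt t)) + Eh := by
      filter_upwards [hmem] with z hz
      exact hrel (z, t) hz
    have h2 := (hFx y).congr_of_eventuallyEq hev
    have huniq := h1.unique h2
    rw [← huniq]; push_cast; field_simp
  -- time relation
  have htime : (2:ℕ) * (1 + β * u (x, t)) ^ 1 * (β * deriv (fun s => u (x, s)) t) =
      Dh * (2 / Real.sqrt Real.pi * Real.exp (-(Real.sqrt α * x / 2 * (Real.sqrt t)⁻¹) ^ 2)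
        * (Real.sqrt α * x / 2 * (-(1 / (2 * Real.sqrt t)) / Real.sqrt t ^ 2))) := by
    have h1 : HasDerivAt (fun s => (1 + β * u (x, s)) ^ 2)
        ((2:ℕ) * (1 + β * u (x, t)) ^ 1 * (β * deriv (fun s => u (x, s)) t)) t :=
      ((hut.const_mul β).const_add 1).pow 2
    have hmem : ∀ᶠ s in nhds t, (x, s) ∈ Ω :=
      (continuousAt_const.prodMk continuousAt_id).preimage_mem_nhds (hΩ.mem_nhds hp)
    have hev : (fun s => (1 + β * u (x, s)) ^ 2) =ᶠ[nhds t]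
        fun s => Dh * erf (Real.sqrt α * x / (2 * Real.sqrt s)) + Eh := by
      filter_upwards [hmem] with s hs
      exact hrel (x, s) hs
    exact h1.unique (hFt.congr_of_eventuallyEq hev)
  -- RHS of the PDE
  have hmemx : ∀ᶠ y in nhds x, (y, t) ∈ Ω :=
    (continuousAt_id.prodMk continuousAt_const).preimage_mem_nhds (hΩ.mem_nhds hp)
  have hgev : (fun y => k₀ * (1 + β * u (y, t)) * deriv (fun z => u (z, t)) y) =ᶠ[nhds x]
      fun y => k₀ / (2 * β) * (Dh * (2 / Real.sqrt Real.pi * Real.exp (-(c * y) ^ 2) * c)) := by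
    filter_upwards [hmemx] with y hy
    exact hspace y hy
  have hrhs : deriv (fun y => k₀ * (1 + β * u (y, t)) * deriv (fun z => u (z, t)) y) x =
      k₀ / (2 * β) * (Dh * (2 / Real.sqrt Real.pi *
        (Real.exp (-(c * x) ^ 2) * (-((2:ℕ) * (c * x) ^ 1 * c))) * c)) := by
    rw [hgev.deriv_eq]
    exact (hFxx.const_mul (k₀ / (2 * β))).deriv
  show ρ * c₀ * (1 + β * u (x, t)) * deriv (fun s => u (x, s)) t =
      deriv (fun y => k₀ * (1 + β * u (y, t)) * deriv (fun z => u (z, t)) y) x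
  rw [hrhs]
  -- final algebra
  have h2t : Real.sqrt t ^ 2 = t := Real.sq_sqrt ht.le
  have h2a : Real.sqrt α * Real.sqrt α = α := Real.mul_self_sqrt hα0.le
  have hkα : k₀ * α = ρ * c₀ := by rw [hα]; field_simp
  have hargx : Real.sqrt α * x / 2 * (Real.sqrt t)⁻¹ = c * x := by rw [hcdef]; ring
  rw [hargx] at htime
  rw [hcdef] at htime ⊢
  have hπ : Real.sqrt Real.pi ≠ 0 := ne_of_gt (Real.sqrt_pos.mpr Real.pi_pos)
  field_simp at htime ⊢
  linear_combination 2 * ρ * c₀ * htime +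
    2 * Dh * Real.exp (-(Real.sqrt α ^ 2 * x ^ 2 / (2 ^ 2 * Real.sqrt t ^ 2))) * Real.sqrt α * x * k₀ * h2a +
    2 * Dh * Real.exp (-(Real.sqrt α ^ 2 * x ^ 2 / (2 ^ 2 * Real.sqrt t ^ 2))) * Real.sqrt α * x * hkα
end

section
/- Let ρ, c₀, k₀ be positive real constants, β ≥ 0, p > 0, and a, b real constants, and set α := ρc₀/k₀. Let Ω ⊆ ℝ × (0,∞) be open and u : ℝ × ℝ → ℝ twice continuously differentiable on Ω with u(x,t) > 0 and satisfying the implicit relation u(x,t) + β·u(x,t)^{p+1}/(p+1) = t^{-1/2}·( a·x/t + b )·exp( -α x²/(4t) ) for all (x,t) ∈ Ω. Then u satisfies ρc₀(1+βu^p)·∂_t u = ∂_x( k₀(1+βu^p)·∂_x u ) at every point of Ω. (Invariant solution associated with the generator X̄₁ for power-type coefficients.) -/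
open Filter

/-- The explicit right-hand side. -/
noncomputable def Fa (α a b : ℝ) (y τ : ℝ) : ℝ :=
  τ ^ (-(1 / 2) : ℝ) * (a * y / τ + b) * Real.exp (-α * y ^ 2 / (4 * τ))

/-- Its spatial partial derivative. -/
noncomputable def Fax (α a b : ℝ) (y τ : ℝ) : ℝ :=
  τ ^ (-(1 / 2) : ℝ) *
    (a / τ * Real.exp (-α * y ^ 2 / (4 * τ)) +
      (a * y / τ + b) * (Real.exp (-α * y ^ 2 / (4 * τ)) * (-α * (2 * y) / (4 * τ))))

/-- Its time partial derivative. -/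
noncomputable def Fat (α a b : ℝ) (y τ : ℝ) : ℝ :=
  ((-(1 / 2) : ℝ) * τ ^ ((-(1 / 2) : ℝ) - 1) * (a * y / τ + b)
      + τ ^ (-(1 / 2) : ℝ) * (a * y * (-(τ ^ 2)⁻¹))) * Real.exp (-α * y ^ 2 / (4 * τ))
    + τ ^ (-(1 / 2) : ℝ) * (a * y / τ + b) *
        (Real.exp (-α * y ^ 2 / (4 * τ)) * (-α * y ^ 2 / 4 * (-(τ ^ 2)⁻¹)))

lemma hasE (α : ℝ) (τ y : ℝ) :
    HasDerivAt (fun z : ℝ => Real.exp (-α * z ^ 2 / (4 * τ)))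
      (Real.exp (-α * y ^ 2 / (4 * τ)) * (-α * (2 * y) / (4 * τ))) y := by
  have h1 : HasDerivAt (fun z : ℝ => -α * z ^ 2 / (4 * τ)) (-α * (2 * y) / (4 * τ)) y := by
    have := ((hasDerivAt_pow 2 y).const_mul (-α)).div_const (4 * τ)
    refine this.congr_deriv ?_
    simp
  exact h1.exp

lemma hasl (a τ b y : ℝ) : HasDerivAt (fun z : ℝ => a * z / τ + b) (a / τ) y := by
  have := (((hasDerivAt_id' (x := y))).const_mul a).div_const τ
  simpa using this.add_const b

lemma hasFax (α a b τ : ℝ) (y : ℝ) :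
    HasDerivAt (fun z => Fa α a b z τ) (Fax α a b y τ) y := by
  have hE := hasE α τ y
  have h := (((hasl a τ b y).mul hE).const_mul (τ ^ (-(1 / 2) : ℝ)))
  have h2 := h.congr_of_eventuallyEq
    (Eventually.of_forall (fun z => by unfold Fa; simp only [Pi.mul_apply, Pi.add_apply]; ring) :
      (fun z => Fa α a b z τ) =ᶠ[nhds y] _)
  exact h2

lemma hasFat (α a b : ℝ) {τ : ℝ} (hτ : 0 < τ) (y : ℝ) :
    HasDerivAt (fun σ => Fa α a b y σ) (Fat α a b y τ) τ := by
  have hs : HasDerivAt (fun σ : ℝ => σ ^ (-(1 / 2) : ℝ))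
      ((-(1 / 2) : ℝ) * τ ^ ((-(1 / 2) : ℝ) - 1)) τ :=
    Real.hasDerivAt_rpow_const (Or.inl hτ.ne')
  have hl : HasDerivAt (fun σ : ℝ => a * y / σ + b) (a * y * (-(τ ^ 2)⁻¹)) τ := by
    have := ((hasDerivAt_inv hτ.ne').const_mul (a * y)).add_const b
    exact this.congr_of_eventuallyEq (Eventually.of_forall fun σ => by ring)
  have hj : HasDerivAt (fun σ : ℝ => -α * y ^ 2 / (4 * σ)) (-α * y ^ 2 / 4 * (-(τ ^ 2)⁻¹)) τ := by
    have := (hasDerivAt_inv hτ.ne').const_mul (-α * y ^ 2 / 4)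
    exact this.congr_of_eventuallyEq (Eventually.of_forall fun σ => by ring)
  have h := (hs.mul hl).mul hj.exp
  have h2 := h.congr_of_eventuallyEq
    (Eventually.of_forall (fun σ => by unfold Fa; simp only [Pi.mul_apply, Pi.add_apply]) :
      (fun σ => Fa α a b y σ) =ᶠ[nhds τ] _)
  exact h2

lemma hasFaxx (ρ c₀ k₀ α a b : ℝ) (hk : k₀ ≠ 0) (hα : α = ρ * c₀ / k₀)
    {τ : ℝ} (hτ : 0 < τ) (y : ℝ) :
    HasDerivAt (fun z => k₀ * Fax α a b z τ) (ρ * c₀ * Fat α a b y τ) y := by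
  have hE := hasE α τ y
  have hl := hasl a τ b y
  have hg : HasDerivAt (fun z : ℝ => -α * (2 * z) / (4 * τ)) (-α * 2 / (4 * τ)) y := by
    have := (((hasDerivAt_id' (x := y)).const_mul (2 : ℝ)).const_mul (-α)).div_const (4 * τ)
    exact this.congr_of_eventuallyEq (Eventually.of_forall fun z => by ring) |>.congr_deriv (by ring)
  have h := (((hE.const_mul (a / τ)).add (hl.mul (hE.mul hg))).const_mul
      (τ ^ (-(1 / 2) : ℝ))).const_mul k₀
  have h2 := h.congr_of_eventuallyEq
    (Eventually.of_forall (fun z => by unfold Fax; simp only [Pi.mul_apply, Pi.add_apply]) :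
      (fun z => k₀ * Fax α a b z τ) =ᶠ[nhds y] _)
  refine h2.congr_deriv ?_
  have hss : τ ^ ((-(1 / 2) : ℝ) - 1) = τ ^ (-(1 / 2) : ℝ) / τ := by
    rw [Real.rpow_sub hτ, Real.rpow_one]
  unfold Fat
  rw [hss, hα]
  simp only [Pi.mul_apply]
  field_simp
  ring

lemma hasPhi (β p : ℝ) (hp : 0 < p) {v : ℝ} (hv : 0 < v) :
    HasDerivAt (fun y : ℝ => y + β * y ^ (p + 1) / (p + 1)) (1 + β * v ^ p) v := by
  have h1 : HasDerivAt (fun y : ℝ => y ^ (p + 1)) ((p + 1) * v ^ (p + 1 - 1)) v :=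
    Real.hasDerivAt_rpow_const (Or.inl hv.ne')
  have h2 := (hasDerivAt_id' (x := v)).add ((h1.const_mul β).div_const (p + 1))
  refine h2.congr_deriv ?_
  rw [show p + 1 - 1 = p by ring]
  have hpne : p + 1 ≠ 0 := by linarith
  field_simp

/-- Invariant solution associated with the generator `X̄₁` for power-type coefficients:
if `u + β·u^{p+1}/(p+1) = t^{-1/2}(a·x/t + b)·exp(-αx²/(4t))` with `α = ρc₀/k₀`, then
`u` solves `ρc₀(1+βu^p)u_t = (k₀(1+βu^p)u_x)_x` on `Ω`. -/
theorem stmt17 (ρ c₀ k₀ β p a b : ℝ)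
    (hρ : 0 < ρ) (hc : 0 < c₀) (hk : 0 < k₀) (hβ : 0 ≤ β) (hp : 0 < p)
    (α : ℝ) (hα : α = ρ * c₀ / k₀)
    (Ω : Set (ℝ × ℝ)) (hΩ : IsOpen Ω) (hΩsub : Ω ⊆ {q : ℝ × ℝ | 0 < q.2})
    (u : ℝ × ℝ → ℝ) (hu : ContDiffOn ℝ 2 u Ω)
    (hupos : ∀ q ∈ Ω, 0 < u q)
    (hrel : ∀ q ∈ Ω, u q + β * u q ^ (p + 1) / (p + 1) =
      q.2 ^ (-(1 / 2) : ℝ) * (a * q.1 / q.2 + b) *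
        Real.exp (-α * q.1 ^ 2 / (4 * q.2))) :
    ∀ q ∈ Ω,
      heatEqAt (fun y => ρ * c₀ * (1 + β * y ^ p)) (fun y => k₀ * (1 + β * y ^ p)) u q := by
  intro q hq
  obtain ⟨x, t⟩ := q
  have ht : 0 < t := hΩsub hq
  have hu0 : 0 < u (x, t) := hupos _ hq
  have hdiff : ∀ q' ∈ Ω, DifferentiableAt ℝ u q' := fun q' hq' =>
    (hu.contDiffAt (hΩ.mem_nhds hq')).differentiableAt (by norm_num)
  -- time derivative
  have hut : HasDerivAt (fun s => u (x, s)) (deriv (fun s => u (x, s)) t) t := by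
    have h : DifferentiableAt ℝ (fun s : ℝ => u (x, s)) t := by
      have := (hdiff _ hq).comp t
        ((differentiableAt_const x).prodMk (differentiableAt_id (x := t)))
      exact this
    exact h.hasDerivAt
  have hkey_t : (1 + β * u (x, t) ^ p) * deriv (fun s => u (x, s)) t = Fat α a b x t := by
    have hcomp := (hasPhi β p hp hu0).comp t hut
    have hopen : IsOpen {s : ℝ | (x, s) ∈ Ω} :=
      hΩ.preimage (continuous_const.prodMk continuous_id)
    have hev : (fun s => u (x, s) + β * u (x, s) ^ (p + 1) / (p + 1))
        =ᶠ[nhds t] fun s => Fa α a b x s :=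
      eventually_of_mem (hopen.mem_nhds hq) (fun s hs => by simpa [Fa] using hrel (x, s) hs)
    exact hcomp.unique ((hasFat α a b ht x).congr_of_eventuallyEq hev)
  -- spatial identity on a neighborhood
  have hΩx : IsOpen {z : ℝ | (z, t) ∈ Ω} :=
    hΩ.preimage (continuous_id.prodMk continuous_const)
  have hx_id : ∀ z, (z, t) ∈ Ω →
      (1 + β * u (z, t) ^ p) * deriv (fun w => u (w, t)) z = Fax α a b z t := by
    intro z hz
    have huz : HasDerivAt (fun w => u (w, t)) (deriv (fun w => u (w, t)) z) z := by
      have h : DifferentiableAt ℝ (fun w : ℝ => u (w, t)) z := by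
        have := (hdiff _ hz).comp z
          (((differentiableAt_id (x := z)).prodMk (differentiableAt_const t)) :
            DifferentiableAt ℝ (fun w : ℝ => (w, t)) z)
        exact this
      exact h.hasDerivAt
    have hcomp := (hasPhi β p hp (hupos _ hz)).comp z huz
    have hev : (fun w => u (w, t) + β * u (w, t) ^ (p + 1) / (p + 1))
        =ᶠ[nhds z] fun w => Fa α a b w t :=
      eventually_of_mem (hΩx.mem_nhds hz) (fun w hw => by simpa [Fa] using hrel (w, t) hw)
    exact hcomp.unique ((hasFax α a b t z).congr_of_eventuallyEq hev)
  have hevK : (fun y => k₀ * (1 + β * u (y, t) ^ p) * deriv (fun z => u (z, t)) y)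
      =ᶠ[nhds x] fun y => k₀ * Fax α a b y t :=
    eventually_of_mem (hΩx.mem_nhds hq) (fun y hy => by
      show k₀ * (1 + β * u (y, t) ^ p) * deriv (fun z => u (z, t)) y = k₀ * Fax α a b y t
      rw [mul_assoc, hx_id y hy])
  have hrhs : deriv (fun y => k₀ * (1 + β * u (y, t) ^ p) * deriv (fun z => u (z, t)) y) x
      = ρ * c₀ * Fat α a b x t := by
    rw [hevK.deriv_eq]
    exact (hasFaxx ρ c₀ k₀ α a b hk.ne' hα ht x).deriv
  show ρ * c₀ * (1 + β * u (x, t) ^ p) * deriv (fun s => u (x, s)) t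
      = deriv (fun y => k₀ * (1 + β * u (y, t) ^ p) * deriv (fun z => u (z, t)) y) x
  rw [hrhs, mul_assoc, hkey_t]
end
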